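/- arXiv:2509.15960 — 5 statements merged into one kernel-verified Lean document; each statement's English description precedes it below -/
import Mathlib

section
/- Convolution estimate, minimum case (Lemma 2.3(1)). Let γ > 0, let f : ℝ → ℝ be twice continuously differentiable with f'' ≥ γ on ℝ, and let g : ℝ → ℝ be continuous, attaining its minimum m = min_ℝ g at some point c ∈ ℝ. Assume the map φ = √((g − m)/γ) is K-Lipschitz with 0 < K ≤ 1, and set α = (√(1+8K²) − 1)/(4K²). Let u : ℝ → ℝ be a bounded continuously differentiable function with bounded derivative u'. Then for every x ∈ ℝ and for either choice of sign, ∫_ℝ p(x − y) 1_{ℝ^±}(x − y) [ g(u(y)) + (f''(u(y))/2) u'(y)² ] dy ≥ (α/2)( g(u(x)) − m ) + m/2, where 1_{ℝ^+} and 1_{ℝ^-} denote the indicator functions of the positive and negative half-lines. -/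
open MeasureTheory Set

/-- The kernel `p(x) = (1/2) e^{-|x|}`. -/
noncomputable def pker (x : ℝ) : ℝ := (1 / 2) * Real.exp (-|x|)

open Filter

lemma alpha_facts (K α : ℝ) (hK0 : 0 < K)
    (hα : α = (Real.sqrt (1 + 8 * K ^ 2) - 1) / (4 * K ^ 2)) :
    0 ≤ α ∧ 2*K^2*α^2 + α = 1 := by
  have h1 : (0:ℝ) ≤ 1 + 8*K^2 := by positivity
  have hs : Real.sqrt (1 + 8*K^2) ^ 2 = 1 + 8*K^2 := Real.sq_sqrt h1
  have hs0 : 0 ≤ Real.sqrt (1 + 8*K^2) := Real.sqrt_nonneg _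
  have hs1 : 1 ≤ Real.sqrt (1 + 8*K^2) := by nlinarith
  have hK2 : (0:ℝ) < 4*K^2 := by positivity
  constructor
  · rw [hα]
    apply div_nonneg (by linarith) hK2.le
  · rw [hα]; field_simp; nlinarith [Real.sq_sqrt (show (0:ℝ) ≤ 1 + K^2*8 by positivity)]

lemma integrable_exp_bdd {h : ℝ → ℝ} (hc : Continuous h) {M : ℝ} (hM : ∀ t, |h t| ≤ M) :
    MeasureTheory.IntegrableOn (fun t => Real.exp (-t) * h t) (Set.Ioi (0:ℝ)) := by
  have hM0 : 0 ≤ M := le_trans (abs_nonneg _) (hM 0)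
  have h1 : MeasureTheory.IntegrableOn (fun t => Real.exp (-1 * t) * M) (Set.Ioi (0:ℝ)) :=
    (exp_neg_integrableOn_Ioi 0 one_pos).mul_const M
  have h2 : AEStronglyMeasurable (fun t => Real.exp (-t) * h t) (volume.restrict (Set.Ioi (0:ℝ))) :=
    ((Real.continuous_exp.comp continuous_neg).mul hc).aestronglyMeasurable
  refine MeasureTheory.Integrable.mono h1 h2 (ae_of_all _ ?_)
  intro t
  simp only [norm_mul, Real.norm_eq_abs, Real.abs_exp, neg_mul, one_mul]
  have h3 : |M| = M := abs_of_nonneg hM0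
  rw [h3]
  have h4 := Real.exp_pos (-t)
  nlinarith [hM t, abs_nonneg (h t)]

lemma core (K α : ℝ) (hK0 : 0 < K) (hα0 : 0 ≤ α) (hα2 : 2*K^2*α^2 + α = 1)
    (q W : ℝ → ℝ) (hq : Continuous q) (hqnn : ∀ t, 0 ≤ q t)
    (hWc : Continuous W) (hWnn : ∀ t, 0 ≤ W t)
    (hWL : ∀ t, 0 ≤ t → W 0 - K * ∫ s in (0:ℝ)..t, q s ≤ W t)
    (hInt : IntegrableOn (fun t => Real.exp (-t) * (W t ^ 2 + q t ^ 2 / 2)) (Ioi 0)) :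
    α * W 0 ^ 2 ≤ ∫ t in Ioi (0:ℝ), Real.exp (-t) * (W t ^ 2 + q t ^ 2 / 2) := by
  set a := W 0 with ha
  have ha0 : 0 ≤ a := hWnn 0
  set I := ∫ t in Ioi (0:ℝ), Real.exp (-t) * (W t ^ 2 + q t ^ 2 / 2) with hI
  set Z : ℝ → ℝ := fun t => a - K * ∫ s in (0:ℝ)..t, q s with hZdef
  have hZ0 : Z 0 = a := by simp [hZdef]
  have hZd : ∀ t, HasDerivAt Z (-(K * q t)) t := by
    intro t
    have hV : HasDerivAt (fun t => ∫ s in (0:ℝ)..t, q s) (q t) t :=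
      intervalIntegral.integral_hasDerivAt_right (hq.intervalIntegrable 0 t)
        hq.stronglyMeasurable.stronglyMeasurableAtFilter hq.continuousAt
    simpa using (hV.const_mul K).const_sub a
  have hZc : Continuous Z := by
    rw [continuous_iff_continuousAt]; exact fun t => (hZd t).continuousAt
  have hZle : ∀ t, 0 ≤ t → Z t ≤ a := by
    intro t ht
    have : 0 ≤ ∫ s in (0:ℝ)..t, q s :=
      intervalIntegral.integral_nonneg ht (fun s _ => hqnn s)
    simp only [hZdef]; nlinarith
  have hZW : ∀ t, 0 ≤ t → Z t ≤ W t := fun t ht => hWL t ht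
  -- claim 1
  have claim1 : ∀ T, 0 ≤ T → (∀ t ∈ Icc (0:ℝ) T, 0 ≤ Z t) →
      α * a^2 - α * Real.exp (-T) * Z T ^ 2 ≤ I := by
    intro T hT hZpos
    have hΦd : ∀ t, HasDerivAt (fun t => -α * (Real.exp (-t) * Z t ^ 2))
        (α * Real.exp (-t) * Z t ^2 + 2*α*K*Real.exp (-t) * Z t * q t) t := by
      intro t
      have h1 : HasDerivAt (fun t : ℝ => Real.exp (-t)) (-Real.exp (-t)) t := by
        simpa using (hasDerivAt_neg t).exp
      have h2 : HasDerivAt (fun t => Z t ^ 2) (2 * Z t * (-(K * q t))) t := by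
        simpa [mul_comm] using (hZd t).fun_pow 2
      have h3 := (h1.fun_mul h2).const_mul (-α)
      exact h3.congr_deriv (by ring)
    have hq2c : Continuous fun t => α * Real.exp (-t) * Z t ^2 + 2*α*K*Real.exp (-t) * Z t * q t := by
      fun_prop
    have hFTC : ∫ t in (0:ℝ)..T, (α * Real.exp (-t) * Z t ^2 + 2*α*K*Real.exp (-t) * Z t * q t)
        = (-α * (Real.exp (-T) * Z T ^ 2)) - (-α * (Real.exp (-0) * Z 0 ^ 2)) :=
      intervalIntegral.integral_eq_sub_of_hasDerivAt (fun t _ => hΦd t)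
        (hq2c.intervalIntegrable 0 T)
    have hid : ∀ t, Real.exp (-t) * (Z t ^2 + q t ^2/2)
        = Real.exp (-t)/(2*K^2) * (2*K^2*α*Z t - K*q t)^2
          + (α * Real.exp (-t) * Z t ^2 + 2*α*K*Real.exp (-t) * Z t * q t) := by
      intro t
      have hKne : (K:ℝ) ≠ 0 := ne_of_gt hK0
      have e : Real.exp (-t)/(2*K^2) * (2*K^2*α*Z t - K*q t)^2
          = Real.exp (-t) * (2*K^2*α^2*Z t^2 - 2*α*K*Z t*q t + q t^2/2) := by
        rw [div_mul_eq_mul_div, div_eq_iff (by positivity)]; ring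
      rw [e]
      linear_combination (-(Real.exp (-t) * Z t^2)) * hα2
    have hsq_int : IntervalIntegrable (fun t => Real.exp (-t)/(2*K^2) * (2*K^2*α*Z t - K*q t)^2) volume 0 T := by
      apply Continuous.intervalIntegrable; fun_prop
    have hsplit : ∫ t in (0:ℝ)..T, Real.exp (-t) * (Z t ^2 + q t ^2/2)
        = (∫ t in (0:ℝ)..T, Real.exp (-t)/(2*K^2) * (2*K^2*α*Z t - K*q t)^2)
          + ∫ t in (0:ℝ)..T, (α * Real.exp (-t) * Z t ^2 + 2*α*K*Real.exp (-t) * Z t * q t) := by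
      rw [← intervalIntegral.integral_add hsq_int (hq2c.intervalIntegrable 0 T)]
      exact intervalIntegral.integral_congr (fun t _ => hid t)
    have hsqnn : 0 ≤ ∫ t in (0:ℝ)..T, Real.exp (-t)/(2*K^2) * (2*K^2*α*Z t - K*q t)^2 :=
      intervalIntegral.integral_nonneg hT (fun t _ => by positivity)
    have step1 : α * a^2 - α * Real.exp (-T) * Z T ^ 2
        ≤ ∫ t in (0:ℝ)..T, Real.exp (-t) * (Z t ^2 + q t ^2/2) := by
      rw [hsplit, hFTC, hZ0]
      simp only [Real.exp_zero, neg_zero]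
      nlinarith
    have step2 : ∫ t in (0:ℝ)..T, Real.exp (-t) * (Z t ^2 + q t ^2/2)
        ≤ ∫ t in (0:ℝ)..T, Real.exp (-t) * (W t ^2 + q t ^2/2) := by
      apply intervalIntegral.integral_mono_on hT
      · apply Continuous.intervalIntegrable; fun_prop
      · apply Continuous.intervalIntegrable; fun_prop
      · intro t ht
        have h1 : 0 ≤ Z t := hZpos t ht
        have h2 : Z t ≤ W t := hZW t ht.1
        have h3 : Z t ^ 2 ≤ W t ^ 2 := by nlinarith
        have he : (0:ℝ) ≤ Real.exp (-t) := (Real.exp_pos _).le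
        have := mul_le_mul_of_nonneg_left (add_le_add_right h3 (q t ^2/2)) he
        linarith
    have step3 : ∫ t in (0:ℝ)..T, Real.exp (-t) * (W t ^2 + q t ^2/2) ≤ I := by
      rw [intervalIntegral.integral_of_le hT]
      apply setIntegral_mono_set hInt
      · filter_upwards with t
        positivity
      · exact (Ioc_subset_Ioi_self).eventuallyLE
    exact le_trans step1 (le_trans step2 step3)
  -- claim 2
  have claim2 : ∀ T, 0 ≤ T → α * a^2 ≤ I + α * Real.exp (-T) * a^2 := by
    intro T hT
    by_cases hpos : ∀ t ∈ Icc (0:ℝ) T, 0 ≤ Z t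
    · have h := claim1 T hT hpos
      have h1 : 0 ≤ Z T := hpos T ⟨hT, le_refl T⟩
      have h2 : Z T ≤ a := hZle T hT
      have h3 : Z T ^2 ≤ a^2 := by nlinarith
      have he : (0:ℝ) ≤ Real.exp (-T) := (Real.exp_pos _).le
      have h4 := mul_le_mul_of_nonneg_left h3 (mul_nonneg hα0 he)
      have h5 : α * Real.exp (-T) * Z T ^2 ≤ α * Real.exp (-T) * a^2 := by
        calc α * Real.exp (-T) * Z T ^2 = α * Real.exp (-T) * Z T ^2 := rfl
          _ ≤ α * Real.exp (-T) * a^2 := by nlinarith [h4]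
      linarith
    · push_neg at hpos
      obtain ⟨t₀, ht₀, hZt₀⟩ := hpos
      set S := {t | t ∈ Icc (0:ℝ) t₀ ∧ Z t ≤ 0} with hSdef
      have hSne : S.Nonempty := ⟨t₀, ⟨⟨ht₀.1, le_refl _⟩, hZt₀.le⟩⟩
      have hSbdd : BddBelow S := ⟨0, fun s hs => hs.1.1⟩
      have hScl : IsClosed S := by
        have : S = Icc (0:ℝ) t₀ ∩ Z ⁻¹' (Iic 0) := by ext t; simp [hSdef, and_comm]
        rw [this]
        exact isClosed_Icc.inter (isClosed_Iic.preimage hZc)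
      set T' := sInf S with hT'def
      have hT'S : T' ∈ S := hScl.csInf_mem hSne hSbdd
      have hT'0 : 0 ≤ T' := hT'S.1.1
      have hminS : ∀ s, 0 ≤ s → s < T' → 0 < Z s := by
        intro s hs0 hsT'
        by_contra hcon
        push_neg at hcon
        have hsS : s ∈ S := ⟨⟨hs0, hsT'.le.trans hT'S.1.2⟩, hcon⟩
        exact absurd (csInf_le hSbdd hsS) (not_le.mpr hsT')
      have hZT'0 : Z T' = 0 := by
        rcases eq_or_lt_of_le hT'0 with h|h
        · refine le_antisymm hT'S.2 ?_
          rw [← h, hZ0]; exact ha0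
        · refine le_antisymm hT'S.2 ?_
          have htend : Tendsto Z (nhdsWithin T' (Iio T')) (nhds (Z T')) :=
            (hZc.continuousAt).continuousWithinAt
          refine ge_of_tendsto htend ?_
          filter_upwards [Ioo_mem_nhdsLT h] with s hs
          exact (hminS s hs.1.le hs.2).le
      have hZpos' : ∀ t ∈ Icc (0:ℝ) T', 0 ≤ Z t := by
        intro t ht
        rcases eq_or_lt_of_le ht.2 with h|h
        · rw [h, hZT'0]
        · exact (hminS t ht.1 h).le
      have h := claim1 T' hT'0 hZpos'
      rw [hZT'0] at h
      have hpos2 : 0 ≤ α * Real.exp (-T) * a^2 := by positivity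
      simp at h
      linarith
  -- limit
  have htend : Tendsto (fun T : ℝ => I + α * Real.exp (-T) * a^2) atTop (nhds (I + α * 0 * a^2)) := by
    apply Tendsto.const_add
    exact (Real.tendsto_exp_neg_atTop_nhds_zero.const_mul α).mul_const _
  have := ge_of_tendsto htend (eventually_atTop.2 ⟨0, fun T hT => claim2 T hT⟩)
  simpa using this

lemma half_estimate
    (γ : ℝ) (hγ : 0 < γ)
    (f : ℝ → ℝ) (hf : ContDiff ℝ 2 f) (hconv : ∀ x : ℝ, γ ≤ deriv (deriv f) x)
    (g : ℝ → ℝ) (hg : Continuous g)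
    (m : ℝ) (hmin : ∀ x : ℝ, m ≤ g x)
    (K : ℝ) (hK0 : 0 < K)
    (φ : ℝ → ℝ) (hφ : ∀ x : ℝ, φ x = Real.sqrt ((g x - m) / γ))
    (hLip : ∀ a b : ℝ, |φ a - φ b| ≤ K * |a - b|)
    (α : ℝ) (hα0 : 0 ≤ α) (hα2 : 2*K^2*α^2 + α = 1)
    (u : ℝ → ℝ) (hu : ContDiff ℝ 1 u)
    (hbd : ∃ C : ℝ, ∀ x : ℝ, |u x| ≤ C ∧ |deriv u x| ≤ C)
    (x σ : ℝ) (hσ : σ = 1 ∨ σ = -1) :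
    (α / 2) * (g (u x) - m) + m / 2 ≤
      ∫ t in Ioi (0:ℝ), pker t *
        (g (u (x - σ * t)) + deriv (deriv f) (u (x - σ * t)) / 2 * (deriv u (x - σ * t)) ^ 2) := by
  obtain ⟨C, hC⟩ := hbd
  have hC0 : (0:ℝ) ≤ C := le_trans (abs_nonneg _) (hC 0).1
  -- continuity facts
  have huc : Continuous u := hu.continuous
  have hu'c : Continuous (deriv u) := (contDiff_one_iff_deriv.mp hu).2
  have hud : Differentiable ℝ u := (contDiff_one_iff_deriv.mp hu).1
  have hf'1 : ContDiff ℝ 1 (deriv f) := by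
    have h2 : ContDiff ℝ (1+1) f := by norm_num [hf]
    exact (contDiff_succ_iff_deriv.mp h2).2.2
  have hf''c : Continuous (deriv (deriv f)) := (contDiff_one_iff_deriv.mp hf'1).2
  -- bounds
  obtain ⟨Mg, hMg⟩ := IsCompact.exists_bound_of_continuousOn (isCompact_Icc (a := -C) (b := C))
    hg.continuousOn
  have hMg' : ∀ y : ℝ, |g (u y)| ≤ Mg := by
    intro y
    have h1 : u y ∈ Icc (-C) C := abs_le.mp (hC y).1
    simpa [Real.norm_eq_abs] using hMg (u y) h1
  obtain ⟨Mf, hMf⟩ := IsCompact.exists_bound_of_continuousOn (isCompact_Icc (a := -C) (b := C))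
    hf''c.continuousOn
  have hMf' : ∀ y : ℝ, |deriv (deriv f) (u y)| ≤ Mf := by
    intro y
    have h1 : u y ∈ Icc (-C) C := abs_le.mp (hC y).1
    simpa [Real.norm_eq_abs] using hMf (u y) h1
  -- ψ and its properties
  set ψ : ℝ → ℝ := fun y => Real.sqrt ((g (u y) - m) / γ) with hψdef
  have hψφ : ∀ y, φ (u y) = ψ y := fun y => hφ (u y)
  have hψc : Continuous ψ := Real.continuous_sqrt.comp (by fun_prop)
  have hψnn : ∀ y, 0 ≤ ψ y := fun y => Real.sqrt_nonneg _
  have hψsq : ∀ y, ψ y ^ 2 = (g (u y) - m) / γ := by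
    intro y
    have h1 : 0 ≤ (g (u y) - m) / γ := div_nonneg (by linarith [hmin (u y)]) hγ.le
    exact Real.sq_sqrt h1
  have hψsq' : ∀ y, γ * ψ y ^ 2 = g (u y) - m := by
    intro y
    rw [hψsq y]
    field_simp
  have hψbd : ∀ y, ψ y ^ 2 ≤ (Mg + |m|) / γ := by
    intro y
    rw [hψsq y]
    have h2 : g (u y) - m ≤ Mg + |m| := by
      have h3 := le_abs_self (g (u y))
      have h4 := neg_abs_le m
      have h5 := hMg' y
      linarith
    gcongr
  -- W and q
  set W : ℝ → ℝ := fun t => ψ (x - σ * t) with hWdef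
  set q : ℝ → ℝ := fun t => |deriv u (x - σ * t)| with hqdef
  have hWc : Continuous W := hψc.comp (by fun_prop)
  have hqc : Continuous q := (hu'c.comp (by fun_prop)).abs
  have hWnn : ∀ t, 0 ≤ W t := fun t => hψnn _
  have hqnn : ∀ t, 0 ≤ q t := fun t => abs_nonneg _
  have hW0 : W 0 = ψ x := by simp [hWdef]
  have hσ1 : |σ| = 1 := by rcases hσ with h|h <;> simp [h]
  -- Lipschitz estimate
  have hWL : ∀ t, 0 ≤ t → W 0 - K * ∫ s in (0:ℝ)..t, q s ≤ W t := by
    intro t ht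
    have hpath : ∀ s : ℝ, HasDerivAt (fun s => u (x - σ * s)) (deriv u (x - σ * s) * (-σ)) s := by
      intro s
      have h1 : HasDerivAt (fun s : ℝ => x - σ * s) (-σ) s := by
        simpa using ((hasDerivAt_id s).const_mul σ).const_sub x
      exact (hud (x - σ * s)).hasDerivAt.comp s h1
    have hFTCu : ∫ s in (0:ℝ)..t, deriv u (x - σ * s) * (-σ)
        = u (x - σ * t) - u (x - σ * 0) :=
      intervalIntegral.integral_eq_sub_of_hasDerivAt (fun s _ => hpath s)
        (((hu'c.comp (by fun_prop)).mul continuous_const).intervalIntegrable 0 t)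
    have habs : ∀ s, |deriv u (x - σ * s) * (-σ)| = q s := by
      intro s
      rw [abs_mul, abs_neg, hσ1, mul_one]
    have hdiff : |u (x - σ * t) - u x| ≤ ∫ s in (0:ℝ)..t, q s := by
      have h1 : |∫ s in (0:ℝ)..t, deriv u (x - σ * s) * (-σ)|
          ≤ ∫ s in (0:ℝ)..t, |deriv u (x - σ * s) * (-σ)| :=
        intervalIntegral.abs_integral_le_integral_abs ht
      have h2 : (∫ s in (0:ℝ)..t, |deriv u (x - σ * s) * (-σ)|) = ∫ s in (0:ℝ)..t, q s :=
        intervalIntegral.integral_congr (fun s _ => habs s)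
      rw [hFTCu] at h1
      rw [h2] at h1
      simpa using h1
    have hlip1 : |φ (u x) - φ (u (x - σ * t))| ≤ K * |u x - u (x - σ * t)| := hLip _ _
    rw [hψφ, hψφ] at hlip1
    have h3 : ψ x - ψ (x - σ * t) ≤ K * |u x - u (x - σ * t)| :=
      le_trans (le_abs_self _) hlip1
    have h4 : |u x - u (x - σ * t)| ≤ ∫ s in (0:ℝ)..t, q s := by
      rw [abs_sub_comm]; exact hdiff
    have h5 : K * |u x - u (x - σ * t)| ≤ K * ∫ s in (0:ℝ)..t, q s :=
      mul_le_mul_of_nonneg_left h4 hK0.le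
    have h6 : W t = ψ (x - σ * t) := rfl
    rw [hW0, h6]
    linarith
  -- integrability
  have hIntWq : IntegrableOn (fun t => Real.exp (-t) * (W t ^ 2 + q t ^ 2 / 2)) (Ioi (0:ℝ)) := by
    apply integrable_exp_bdd (by fun_prop) (M := (Mg + |m|) / γ + C ^ 2 / 2)
    intro t
    have h1 : W t ^ 2 ≤ (Mg + |m|) / γ := hψbd _
    have h2 : q t ^ 2 ≤ C ^ 2 := by
      have := (hC (x - σ * t)).2
      have h3 : q t ≤ C := this
      nlinarith [hqnn t]
    have h4 : 0 ≤ W t ^ 2 + q t ^ 2 / 2 := by positivity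
    rw [abs_of_nonneg h4]
    nlinarith
  have hcore := core K α hK0 hα0 hα2 q W hqc hqnn hWc hWnn hWL hIntWq
  -- F along the ray
  set F : ℝ → ℝ := fun y => g (u y) + deriv (deriv f) (u y) / 2 * (deriv u y) ^ 2 with hFdef
  have hFbd : ∀ y, |F y| ≤ Mg + Mf / 2 * C ^ 2 := by
    intro y
    have h1 := hMg' y
    have h2 := hMf' y
    have h3 := (hC y).2
    have h4 : (deriv u y) ^ 2 ≤ C ^ 2 := by nlinarith [abs_nonneg (deriv u y), sq_abs (deriv u y)]
    have h5 : |deriv (deriv f) (u y) / 2 * (deriv u y) ^ 2| ≤ Mf / 2 * C ^ 2 := by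
      rw [abs_mul, abs_div]
      have h6 : (0:ℝ) ≤ (deriv u y)^2 := sq_nonneg _
      have h7 : |(deriv u y) ^ 2| = (deriv u y)^2 := abs_of_nonneg h6
      rw [h7]
      have h8 : (0:ℝ) ≤ Mf := le_trans (abs_nonneg _) h2
      have : |(2:ℝ)| = 2 := by norm_num
      rw [this]
      apply mul_le_mul (by linarith) h4 h6 (by linarith)
    calc |F y| ≤ |g (u y)| + |deriv (deriv f) (u y) / 2 * (deriv u y) ^ 2| := abs_add_le _ _
      _ ≤ Mg + Mf / 2 * C ^ 2 := add_le_add h1 h5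
  have hFc : Continuous F := by
    apply Continuous.add (hg.comp huc)
    exact ((hf''c.comp huc).div_const 2).mul (hu'c.pow 2)
  -- integrability of both sides of final comparison
  have hFint : IntegrableOn (fun t => pker t * F (x - σ * t)) (Ioi (0:ℝ)) := by
    have h1 : IntegrableOn (fun t => Real.exp (-t) * ((1/2) * F (x - σ * t))) (Ioi (0:ℝ)) := by
      apply integrable_exp_bdd (by fun_prop) (M := (1/2) * (Mg + Mf / 2 * C ^ 2))
      intro t
      rw [abs_mul]
      have : |(1:ℝ)/2| = 1/2 := by norm_num
      rw [this]
      have := hFbd (x - σ * t)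
      linarith
    apply h1.congr_fun _ measurableSet_Ioi
    intro t ht
    simp only [pker, abs_of_pos (mem_Ioi.mp ht)]
    ring
  set L : ℝ → ℝ := fun t => Real.exp (-t) * ((1/2) * (m + γ * W t ^ 2 + γ / 2 * q t ^ 2)) with hLdef
  have hLint : IntegrableOn L (Ioi (0:ℝ)) := by
    apply integrable_exp_bdd (by fun_prop)
      (M := (1/2) * (|m| + γ * ((Mg + |m|) / γ) + γ / 2 * C ^ 2))
    intro t
    have h1 : W t ^ 2 ≤ (Mg + |m|) / γ := hψbd _
    have h2 : q t ^ 2 ≤ C ^ 2 := by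
      have h3 : q t ≤ C := (hC (x - σ * t)).2
      nlinarith [hqnn t]
    have h4 := le_abs_self m
    have h5 := neg_abs_le m
    have h6 : (0:ℝ) ≤ W t ^2 := sq_nonneg _
    have h7 : (0:ℝ) ≤ q t ^2 := sq_nonneg _
    rw [abs_mul]
    have : |(1:ℝ)/2| = 1/2 := by norm_num
    rw [this]
    have ha1 : γ * W t ^ 2 ≤ γ * ((Mg + |m|) / γ) := mul_le_mul_of_nonneg_left h1 hγ.le
    have ha2 : γ / 2 * q t ^ 2 ≤ γ / 2 * C ^ 2 :=
      mul_le_mul_of_nonneg_left h2 (by linarith)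
    have ha3 : (0:ℝ) ≤ γ * W t ^ 2 := mul_nonneg hγ.le h6
    have ha4 : (0:ℝ) ≤ γ / 2 * q t ^ 2 := mul_nonneg (by linarith) h7
    have ha5 : (0:ℝ) ≤ γ * ((Mg + |m|) / γ) := le_trans ha3 ha1
    have ha6 : (0:ℝ) ≤ γ / 2 * C ^ 2 := le_trans ha4 ha2
    have h8 : |m + γ * W t ^ 2 + γ / 2 * q t ^ 2| ≤ |m| + γ * ((Mg + |m|) / γ) + γ / 2 * C ^ 2 := by
      apply abs_le.mpr
      constructor
      · linarith
      · linarith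
    linarith
  -- pointwise comparison on Ioi 0
  have hptwise : ∀ t ∈ Ioi (0:ℝ), L t ≤ pker t * F (x - σ * t) := by
    intro t ht
    have hpk : pker t = (1/2) * Real.exp (-t) := by
      simp [pker, abs_of_pos (mem_Ioi.mp ht)]
    have h1 : g (u (x - σ * t)) = m + γ * W t ^ 2 := by
      have h0 := hψsq' (x - σ * t)
      have hw : W t = ψ (x - σ * t) := rfl
      rw [hw]
      linarith
    have h3 : (deriv u (x - σ * t)) ^ 2 = q t ^ 2 := by
      have hq' : q t = |deriv u (x - σ * t)| := rfl
      rw [hq', sq_abs]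
    have h5 : m + γ * W t ^ 2 + γ / 2 * q t ^ 2 ≤ F (x - σ * t) := by
      have h2 : γ ≤ deriv (deriv f) (u (x - σ * t)) := hconv _
      have h6 : (0:ℝ) ≤ q t ^ 2 := sq_nonneg _
      have h8 : γ / 2 * q t ^ 2 ≤ deriv (deriv f) (u (x - σ * t)) / 2 * (deriv u (x - σ * t)) ^ 2 := by
        rw [h3]
        apply mul_le_mul_of_nonneg_right _ h6
        linarith
      have hFy : F (x - σ * t) = g (u (x - σ * t)) + deriv (deriv f) (u (x - σ * t)) / 2 * (deriv u (x - σ * t)) ^ 2 := rfl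
      rw [hFy, h1]
      linarith
    have h9 : (0:ℝ) ≤ (1/2) * Real.exp (-t) := by positivity
    have h10 := mul_le_mul_of_nonneg_left h5 h9
    have hLt : L t = (1/2) * Real.exp (-t) * (m + γ * W t ^ 2 + γ / 2 * q t ^ 2) := by
      have : L t = Real.exp (-t) * ((1/2) * (m + γ * W t ^ 2 + γ / 2 * q t ^ 2)) := rfl
      rw [this]; ring
    rw [hpk, hLt]
    calc (1/2) * Real.exp (-t) * (m + γ * W t ^ 2 + γ / 2 * q t ^ 2)
        ≤ (1/2) * Real.exp (-t) * F (x - σ * t) := by linarith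
      _ = 1 / 2 * Real.exp (-t) * F (x - σ * t) := by norm_num
  have hcomp : ∫ t in Ioi (0:ℝ), L t ≤ ∫ t in Ioi (0:ℝ), pker t * F (x - σ * t) :=
    setIntegral_mono_on hLint hFint measurableSet_Ioi hptwise
  -- compute ∫ L
  have hLsplit : ∀ t : ℝ, L t = Real.exp (-t) * (m/2)
      + (γ/2) * (Real.exp (-t) * (W t ^ 2 + q t ^ 2 / 2)) := by
    intro t
    rw [hLdef]
    ring
  have hint1 : IntegrableOn (fun t => Real.exp (-t) * (m/2)) (Ioi (0:ℝ)) :=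
    integrable_exp_bdd continuous_const (M := |m/2|) (fun t => le_refl _)
  have hint2 : IntegrableOn (fun t => (γ/2) * (Real.exp (-t) * (W t ^ 2 + q t ^ 2 / 2))) (Ioi (0:ℝ)) :=
    hIntWq.const_mul _
  have hLval : ∫ t in Ioi (0:ℝ), L t = m/2
      + (γ/2) * ∫ t in Ioi (0:ℝ), Real.exp (-t) * (W t ^ 2 + q t ^ 2 / 2) := by
    rw [setIntegral_congr_fun measurableSet_Ioi (fun t _ => hLsplit t)]
    rw [integral_add hint1 hint2]
    rw [MeasureTheory.integral_const_mul]
    congr 1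
    rw [MeasureTheory.integral_mul_const]
    rw [integral_exp_neg_Ioi_zero]
    ring
  -- final chain
  have hgux : g (u x) - m = γ * ψ x ^ 2 := (hψsq' x).symm
  have hcore' : α * ψ x ^ 2 ≤ ∫ t in Ioi (0:ℝ), Real.exp (-t) * (W t ^ 2 + q t ^ 2 / 2) := by
    rw [← hW0]; exact hcore
  have h1 : (γ/2) * (α * ψ x ^2) ≤ (γ/2) * ∫ t in Ioi (0:ℝ), Real.exp (-t) * (W t ^ 2 + q t ^ 2 / 2) :=
    mul_le_mul_of_nonneg_left hcore' (by linarith)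
  rw [hgux]
  linarith

/-- Convolution estimate, minimum case (Lemma 2.3(1)): for either choice of the
half-line indicator, `(p 1_{ℝ^±}) * (g(u) + f''(u)/2 u'²) ≥ (α/2)(g(u) - m) + m/2`. -/
theorem convolution_estimate_min
    (γ : ℝ) (hγ : 0 < γ)
    (f : ℝ → ℝ) (hf : ContDiff ℝ 2 f) (hconv : ∀ x : ℝ, γ ≤ deriv (deriv f) x)
    (g : ℝ → ℝ) (hg : Continuous g)
    (c m : ℝ) (hgc : g c = m) (hmin : ∀ x : ℝ, m ≤ g x)
    (K : ℝ) (hK0 : 0 < K) (hK1 : K ≤ 1)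
    (φ : ℝ → ℝ) (hφ : ∀ x : ℝ, φ x = Real.sqrt ((g x - m) / γ))
    (hLip : ∀ a b : ℝ, |φ a - φ b| ≤ K * |a - b|)
    (α : ℝ) (hα : α = (Real.sqrt (1 + 8 * K ^ 2) - 1) / (4 * K ^ 2))
    (u : ℝ → ℝ) (hu : ContDiff ℝ 1 u)
    (hbd : ∃ C : ℝ, ∀ x : ℝ, |u x| ≤ C ∧ |deriv u x| ≤ C) :
    ∀ x : ℝ,
      (α / 2) * (g (u x) - m) + m / 2 ≤
        ∫ y : ℝ, pker (x - y) * Set.indicator (Set.Ioi (0 : ℝ)) (fun _ => (1 : ℝ)) (x - y) *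
          (g (u y) + deriv (deriv f) (u y) / 2 * (deriv u y) ^ 2) ∧
      (α / 2) * (g (u x) - m) + m / 2 ≤
        ∫ y : ℝ, pker (x - y) * Set.indicator (Set.Iio (0 : ℝ)) (fun _ => (1 : ℝ)) (x - y) *
          (g (u y) + deriv (deriv f) (u y) / 2 * (deriv u y) ^ 2) := by
  obtain ⟨hα0, hα2⟩ := alpha_facts K α hK0 hα
  intro x
  set F : ℝ → ℝ := fun y => g (u y) + deriv (deriv f) (u y) / 2 * (deriv u y) ^ 2 with hFdef
  constructor
  · -- Ioi case
    have e1 : (∫ y : ℝ, pker (x - y) * Set.indicator (Set.Ioi (0:ℝ)) (fun _ => (1:ℝ)) (x - y) * F y)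
        = ∫ t : ℝ, pker t * Set.indicator (Set.Ioi (0:ℝ)) (fun _ => (1:ℝ)) t * F (x - t) := by
      calc (∫ y : ℝ, pker (x - y) * Set.indicator (Set.Ioi (0:ℝ)) (fun _ => (1:ℝ)) (x - y) * F y)
          = ∫ y : ℝ, (fun z : ℝ => (fun w : ℝ => pker w * Set.indicator (Set.Ioi (0:ℝ)) (fun _ => (1:ℝ)) w * F (x - w)) (x + z)) (-y) := by
            congr 1
            funext y
            have h2 : x + -y = x - y := by ring
            have h3 : x - (x + -y) = y := by ring
            have h4 : x - (x - y) = y := by ring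
            simp only [h2, h3, h4]
        _ = ∫ z : ℝ, (fun w : ℝ => pker w * Set.indicator (Set.Ioi (0:ℝ)) (fun _ => (1:ℝ)) w * F (x - w)) (x + z) := by
            exact integral_neg_eq_self (fun z : ℝ => (fun w : ℝ => pker w * Set.indicator (Set.Ioi (0:ℝ)) (fun _ => (1:ℝ)) w * F (x - w)) (x + z)) volume
        _ = ∫ w : ℝ, pker w * Set.indicator (Set.Ioi (0:ℝ)) (fun _ => (1:ℝ)) w * F (x - w) := by
            exact integral_add_left_eq_self (fun w : ℝ => pker w * Set.indicator (Set.Ioi (0:ℝ)) (fun _ => (1:ℝ)) w * F (x - w)) x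
    have e2 : (∫ t : ℝ, pker t * Set.indicator (Set.Ioi (0:ℝ)) (fun _ => (1:ℝ)) t * F (x - t))
        = ∫ t in Ioi (0:ℝ), pker t * F (x - t) := by
      rw [← MeasureTheory.integral_indicator measurableSet_Ioi]
      congr 1
      funext t
      by_cases ht : t ∈ Ioi (0:ℝ)
      · simp [Set.indicator_of_mem ht]
      · simp [Set.indicator_of_notMem ht]
    have h := half_estimate γ hγ f hf hconv g hg m hmin K hK0 φ hφ hLip α hα0 hα2 u hu hbd x 1 (Or.inl rfl)
    simp only [one_mul] at h
    rw [e1, e2]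
    exact h
  · -- Iio case
    have e1 : (∫ y : ℝ, pker (x - y) * Set.indicator (Set.Iio (0:ℝ)) (fun _ => (1:ℝ)) (x - y) * F y)
        = ∫ t : ℝ, pker t * Set.indicator (Set.Iio (0:ℝ)) (fun _ => (1:ℝ)) t * F (x - t) := by
      calc (∫ y : ℝ, pker (x - y) * Set.indicator (Set.Iio (0:ℝ)) (fun _ => (1:ℝ)) (x - y) * F y)
          = ∫ y : ℝ, (fun z : ℝ => (fun w : ℝ => pker w * Set.indicator (Set.Iio (0:ℝ)) (fun _ => (1:ℝ)) w * F (x - w)) (x + z)) (-y) := by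
            congr 1
            funext y
            have h2 : x + -y = x - y := by ring
            have h3 : x - (x + -y) = y := by ring
            have h4 : x - (x - y) = y := by ring
            simp only [h2, h3, h4]
        _ = ∫ z : ℝ, (fun w : ℝ => pker w * Set.indicator (Set.Iio (0:ℝ)) (fun _ => (1:ℝ)) w * F (x - w)) (x + z) := by
            exact integral_neg_eq_self (fun z : ℝ => (fun w : ℝ => pker w * Set.indicator (Set.Iio (0:ℝ)) (fun _ => (1:ℝ)) w * F (x - w)) (x + z)) volume
        _ = ∫ w : ℝ, pker w * Set.indicator (Set.Iio (0:ℝ)) (fun _ => (1:ℝ)) w * F (x - w) := by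
            exact integral_add_left_eq_self (fun w : ℝ => pker w * Set.indicator (Set.Iio (0:ℝ)) (fun _ => (1:ℝ)) w * F (x - w)) x
    have e2 : (∫ t : ℝ, pker t * Set.indicator (Set.Iio (0:ℝ)) (fun _ => (1:ℝ)) t * F (x - t))
        = ∫ t in Ioi (0:ℝ), pker t * F (x + t) := by
      have h0 : (∫ t : ℝ, pker t * Set.indicator (Set.Iio (0:ℝ)) (fun _ => (1:ℝ)) t * F (x - t))
          = ∫ t : ℝ, pker (-t) * Set.indicator (Set.Iio (0:ℝ)) (fun _ => (1:ℝ)) (-t) * F (x - (-t)) := by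
        rw [MeasureTheory.integral_neg_eq_self
          (fun t : ℝ => pker t * Set.indicator (Set.Iio (0:ℝ)) (fun _ => (1:ℝ)) t * F (x - t))]
      rw [h0, ← MeasureTheory.integral_indicator measurableSet_Ioi]
      congr 1
      funext t
      have hpk : pker (-t) = pker t := by simp [pker]
      by_cases ht : t ∈ Ioi (0:ℝ)
      · have hmt : -t ∈ Iio (0:ℝ) := by simpa using ht
        rw [Set.indicator_of_mem ht, Set.indicator_of_mem hmt, hpk]
        simp [sub_neg_eq_add]
      · have hmt : -t ∉ Iio (0:ℝ) := by simpa using ht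
        rw [Set.indicator_of_notMem ht, Set.indicator_of_notMem hmt]
        simp
    have h := half_estimate γ hγ f hf hconv g hg m hmin K hK0 φ hφ hLip α hα0 hα2 u hu hbd x (-1) (Or.inr rfl)
    simp only [neg_mul, one_mul, sub_neg_eq_add] at h
    rw [e1, e2]
    exact h
end

section
/- Convolution estimate, maximum case (Lemma 2.3(2)). Let γ > 0, let f : ℝ → ℝ be twice continuously differentiable with f'' ≥ γ on ℝ, and let g : ℝ → ℝ be continuous, attaining its maximum M = max_ℝ g at some point c ∈ ℝ. Assume the map ψ = √((M − g)/γ) is K-Lipschitz with 0 < K ≤ 1/√8, and set α = (1 − √(1−8K²))/(4K²). Let u : ℝ → ℝ be a bounded continuously differentiable function with bounded derivative u'. Then for every x ∈ ℝ and for either choice of sign, ∫_ℝ p(x − y) 1_{ℝ^±}(x − y) [ g(u(y)) + (f''(u(y))/2) u'(y)² ] dy ≥ (α/2)( g(u(x)) − M ) + M/2, where 1_{ℝ^+} and 1_{ℝ^-} denote the indicator functions of the positive and negative half-lines. -/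
open MeasureTheory Set

lemma conv_quad (K α mv w p : ℝ) (hαeq : 2*K^2*α^2 - α + 1 = 0) (hp : p ≤ w^2) :
    p - mv^2/2 ≤ α*(w^2 - 2*K*mv*w) := by
  have expand : α*(w^2 - 2*K*mv*w) - (w^2 - mv^2/2)
      = (1/2)*(mv - 2*α*K*w)^2 - (2*K^2*α^2 - α + 1)*w^2 := by ring
  rw [hαeq] at expand
  have hsq := sq_nonneg (mv - 2*α*K*w)
  linarith

lemma conv_core (K α C a : ℝ) (hα0 : 0 ≤ α) (hαeq : 2*K^2*α^2 - α + 1 = 0)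
    (ha : 0 ≤ a) (hK0 : 0 ≤ K) (φ m : ℝ → ℝ) (hφc : Continuous φ) (hmc : Continuous m)
    (hφ0 : ∀ s, 0 ≤ φ s) (hm0 : ∀ s, 0 ≤ m s) (hφb : ∀ s, φ s ≤ C) (hmb : ∀ s, m s ≤ C)
    (hgrow : ∀ s, 0 ≤ s → φ s ≤ a + K * ∫ t in (0:ℝ)..s, m t) :
    ∫ s in Ioi (0:ℝ), Real.exp (-s) * (φ s ^ 2 - m s ^ 2 / 2) ≤ α * a ^ 2 := by
  have hC0 : 0 ≤ C := le_trans (hφ0 0) (hφb 0)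
  set V : ℝ → ℝ := fun s => ∫ t in (0:ℝ)..s, m t with hV
  have hVd : ∀ s, HasDerivAt V (m s) s := fun s =>
    intervalIntegral.integral_hasDerivAt_right (hmc.intervalIntegrable _ _)
      (hmc.stronglyMeasurableAtFilter _ _) hmc.continuousAt
  have hVc : Continuous V := continuous_iff_continuousAt.mpr fun t => (hVd t).continuousAt
  have hV0 : ∀ s, 0 ≤ s → 0 ≤ V s := fun s hs =>
    intervalIntegral.integral_nonneg hs (fun t _ => hm0 t)
  set Φ : ℝ → ℝ := fun s => α * (Real.exp (-s) * (a + K * V s)^2) with hΦ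
  set Φ' : ℝ → ℝ := fun s =>
    α * (-Real.exp (-s) * (a + K * V s)^2 + Real.exp (-s) * (2*(a + K * V s)*(K * m s))) with hΦ'
  have hΦd : ∀ s, HasDerivAt Φ (Φ' s) s := by
    intro s
    have h1 : HasDerivAt (fun s : ℝ => Real.exp (-s)) (-Real.exp (-s)) s := by
      simpa using (hasDerivAt_neg s).exp
    have h2 : HasDerivAt (fun s => (a + K * V s)^2) (2*(a + K * V s)*(K * m s)) s := by
      have := (((hVd s).const_mul K).const_add a).pow 2
      simpa [Pi.pow_def, mul_comm, mul_assoc, mul_left_comm] using this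
    simpa [hΦ, hΦ', mul_comm, mul_assoc, mul_left_comm] using ((h1.mul h2).const_mul α)
  have hΦ'c : Continuous Φ' := by
    fun_prop
  have hΦnn : ∀ s, 0 ≤ s → 0 ≤ Φ s := by
    intro s hs
    have : (0:ℝ) ≤ (a + K * V s)^2 := sq_nonneg _
    positivity
  have hΦ0 : Φ 0 = α * a ^ 2 := by
    simp [hΦ, hV, intervalIntegral.integral_same]
  have key : ∀ s, 0 ≤ s → Real.exp (-s) * (φ s ^ 2 - m s ^ 2 / 2) ≤ -Φ' s := by
    intro s hs
    set w := a + K * V s with hw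
    have hw0 : 0 ≤ w := by
      have := hV0 s hs
      positivity
    have hφw : φ s ≤ w := hgrow s hs
    have hφ2 : φ s ^ 2 ≤ w ^ 2 := pow_le_pow_left₀ (hφ0 s) hφw 2
    have h0 : (2*K^2*α^2 - α + 1) * w^2 = 0 := by rw [hαeq]; ring
    have base2 : φ s ^ 2 - m s ^ 2 / 2 ≤ α * (w^2 - 2*K*(m s)*w) :=
      conv_quad K α (m s) w (φ s ^ 2) hαeq hφ2
    have hex : (0:ℝ) ≤ Real.exp (-s) := (Real.exp_pos _).le
    have := mul_le_mul_of_nonneg_left base2 hex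
    calc Real.exp (-s) * (φ s ^ 2 - m s ^ 2 / 2)
        ≤ Real.exp (-s) * (α * (w^2 - 2*K*(m s)*w)) := this
      _ = -Φ' s := by simp only [hΦ']; ring
  have hInt : IntegrableOn (fun s => Real.exp (-s) * (φ s ^ 2 - m s ^ 2 / 2)) (Ioi (0:ℝ)) := by
    have hexpInt : IntegrableOn (fun s : ℝ => Real.exp (-s)) (Ioi (0:ℝ)) := by
      simpa using exp_neg_integrableOn_Ioi 0 one_pos
    refine Integrable.mono' (hexpInt.const_mul (C^2 + C^2/2)) ?_ ?_
    · exact ((Real.continuous_exp.comp continuous_neg).mul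
        ((hφc.pow 2).sub ((hmc.pow 2).div_const 2))).aestronglyMeasurable.restrict
    · refine Filter.Eventually.of_forall fun s => ?_
      have h1 : |φ s ^ 2 - m s ^ 2 / 2| ≤ C^2 + C^2/2 := by
        have : φ s ^ 2 ≤ C ^ 2 := pow_le_pow_left₀ (hφ0 s) (hφb s) 2
        have : m s ^ 2 ≤ C ^ 2 := pow_le_pow_left₀ (hm0 s) (hmb s) 2
        rw [abs_le]
        constructor <;> nlinarith [pow_le_pow_left₀ (hφ0 s) (hφb s) 2, sq_nonneg (φ s), sq_nonneg (m s)]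
      have : ‖Real.exp (-s) * (φ s ^ 2 - m s ^ 2 / 2)‖ = Real.exp (-s) * |φ s ^ 2 - m s ^ 2 / 2| := by
        rw [Real.norm_eq_abs, abs_mul, abs_of_pos (Real.exp_pos _)]
      rw [this]
      calc Real.exp (-s) * |φ s ^ 2 - m s ^ 2 / 2| ≤ Real.exp (-s) * (C^2 + C^2/2) :=
            mul_le_mul_of_nonneg_left h1 (Real.exp_pos _).le
        _ = (C^2 + C^2/2) * Real.exp (-s) := by ring
  have keyT : ∀ T, 0 ≤ T → ∫ s in (0:ℝ)..T, Real.exp (-s) * (φ s ^ 2 - m s ^ 2 / 2) ≤ α * a ^ 2 := by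
    intro T hT
    have hftc : ∫ s in (0:ℝ)..T, Φ' s = Φ T - Φ 0 :=
      intervalIntegral.integral_eq_sub_of_hasDerivAt (fun t _ => hΦd t)
        (hΦ'c.intervalIntegrable _ _)
    have hmono : ∫ s in (0:ℝ)..T, Real.exp (-s) * (φ s ^ 2 - m s ^ 2 / 2)
        ≤ ∫ s in (0:ℝ)..T, -Φ' s := by
      refine intervalIntegral.integral_mono_on hT ?_ ?_ ?_
      · exact ((Real.continuous_exp.comp continuous_neg).mul
          ((hφc.pow 2).sub ((hmc.pow 2).div_const 2))).intervalIntegrable _ _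
      · exact (hΦ'c.neg).intervalIntegrable _ _
      · intro s hs; exact key s hs.1
    have : ∫ s in (0:ℝ)..T, -Φ' s = Φ 0 - Φ T := by
      rw [intervalIntegral.integral_neg, hftc]; ring
    rw [this] at hmono
    have := hΦnn T hT
    calc ∫ s in (0:ℝ)..T, Real.exp (-s) * (φ s ^ 2 - m s ^ 2 / 2) ≤ Φ 0 - Φ T := hmono
      _ ≤ Φ 0 := by linarith
      _ = α * a ^ 2 := hΦ0
  have htend := intervalIntegral_tendsto_integral_Ioi 0 hInt Filter.tendsto_id
  exact le_of_tendsto htend (Filter.eventually_atTop.mpr ⟨0, fun T hT => keyT T hT⟩)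

lemma conv_onesided (γ : ℝ) (hγ : 0 < γ) (g : ℝ → ℝ) (hg : Continuous g) (M : ℝ)
    (hmax : ∀ z, g z ≤ M) (K α : ℝ) (hK0 : 0 < K) (hα0 : 0 ≤ α)
    (hαeq : 2*K^2*α^2 - α + 1 = 0)
    (ψ : ℝ → ℝ) (hψ : ∀ z, ψ z = Real.sqrt ((M - g z)/γ))
    (hLip : ∀ a b, |ψ a - ψ b| ≤ K * |a - b|)
    (w m q : ℝ → ℝ) (hwc : Continuous w) (hmc : Continuous m) (hqc : Continuous q)
    (C : ℝ) (hmb : ∀ s, |m s| ≤ C) (hqb : ∀ s, |q s| ≤ C) (hq : ∀ s, γ ≤ q s)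
    (hgb : ∀ s, |g (w s)| ≤ C)
    (hw : ∀ s, 0 ≤ s → |w s - w 0| ≤ ∫ t in (0:ℝ)..s, |m t|) :
    (α/2)*(g (w 0) - M) + M/2
      ≤ ∫ s in Ioi (0:ℝ), (1/2)*Real.exp (-s) * (g (w s) + q s/2 * (m s)^2) := by
  have hC0 : 0 ≤ C := le_trans (abs_nonneg _) (hmb 0)
  -- the function φ
  set φ : ℝ → ℝ := fun s => Real.sqrt ((M - g (w s))/γ) with hφdef
  have hφψ : ∀ s, φ s = ψ (w s) := fun s => (hψ (w s)).symm
  have hφ0 : ∀ s, 0 ≤ φ s := fun s => Real.sqrt_nonneg _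
  have hφc : Continuous φ := ((continuous_const.sub (hg.comp hwc)).div_const γ).sqrt
  have hgφ : ∀ s, g (w s) = M - γ * (φ s)^2 := by
    intro s
    have h1 : (φ s)^2 = (M - g (w s))/γ :=
      Real.sq_sqrt (div_nonneg (sub_nonneg.2 (hmax _)) hγ.le)
    rw [h1, mul_div_assoc', mul_comm γ, mul_div_assoc, div_self hγ.ne', mul_one]; ring
  set Cφ : ℝ := Real.sqrt ((M + C)/γ) with hCφ
  have hφb : ∀ s, φ s ≤ Cφ := by
    intro s
    apply Real.sqrt_le_sqrt
    have := (abs_le.mp (hgb s)).1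
    gcongr
    linarith
  have hgrow : ∀ s, 0 ≤ s → φ s ≤ φ 0 + K * ∫ t in (0:ℝ)..s, |m t| := by
    intro s hs
    have h1 : |ψ (w s) - ψ (w 0)| ≤ K * |w s - w 0| := hLip _ _
    have h2 : φ s - φ 0 ≤ K * |w s - w 0| := by
      rw [hφψ s, hφψ 0]
      exact (le_abs_self _).trans h1
    have h3 : K * |w s - w 0| ≤ K * ∫ t in (0:ℝ)..s, |m t| :=
      mul_le_mul_of_nonneg_left (hw s hs) hK0.le
    linarith
  set C' : ℝ := max Cφ C with hC'
  have hcore : ∫ s in Ioi (0:ℝ), Real.exp (-s) * (φ s ^ 2 - |m s| ^ 2 / 2) ≤ α * (φ 0)^2 :=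
    conv_core K α C' (φ 0) hα0 hαeq (hφ0 0) hK0.le φ (fun s => |m s|) hφc hmc.abs hφ0
      (fun s => abs_nonneg _) (fun s => (hφb s).trans (le_max_left _ _))
      (fun s => (hmb s).trans (le_max_right _ _)) hgrow
  have hcore' : ∫ s in Ioi (0:ℝ), Real.exp (-s) * (φ s ^ 2 - m s ^ 2 / 2) ≤ α * (φ 0)^2 := by
    simpa [sq_abs] using hcore
  -- integrability
  have hexpInt : IntegrableOn (fun s : ℝ => Real.exp (-s)) (Ioi (0:ℝ)) := by
    simpa using exp_neg_integrableOn_Ioi 0 one_pos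
  have hC'0 : 0 ≤ C' := le_trans hC0 (le_max_right _ _)
  have hintA : IntegrableOn (fun s => (1/2)*Real.exp (-s) * (g (w s) + q s/2 * (m s)^2))
      (Ioi (0:ℝ)) := by
    refine Integrable.mono' (hexpInt.const_mul ((1/2)*(C + C/2*C^2))) ?_ ?_
    · exact ((continuous_const.mul (Real.continuous_exp.comp continuous_neg)).mul
        ((hg.comp hwc).add ((hqc.div_const 2).mul (hmc.pow 2)))).aestronglyMeasurable.restrict
    · refine Filter.Eventually.of_forall fun s => ?_
      have he := (Real.exp_pos (-s)).le
      have h1 : |g (w s) + q s/2 * (m s)^2| ≤ C + C/2*C^2 := by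
        have hq1 := abs_le.mp (hqb s)
        have hg1 := abs_le.mp (hgb s)
        have hm1 := abs_le.mp (hmb s)
        have hm2 : m s ^ 2 ≤ C ^ 2 := sq_le_sq' hm1.1 hm1.2
        have hm3 : (0:ℝ) ≤ m s ^ 2 := sq_nonneg _
        rw [abs_le]
        constructor <;> nlinarith
      have heq : ‖(1/2)*Real.exp (-s) * (g (w s) + q s/2 * (m s)^2)‖
          = (1/2)*Real.exp (-s) * |g (w s) + q s/2 * (m s)^2| := by
        rw [Real.norm_eq_abs, abs_mul, abs_mul]
        rw [abs_of_pos (Real.exp_pos _)]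
        norm_num
      rw [heq]
      calc (1/2)*Real.exp (-s) * |g (w s) + q s/2 * (m s)^2|
          ≤ (1/2)*Real.exp (-s) * (C + C/2*C^2) := by
            apply mul_le_mul_of_nonneg_left h1
            positivity
        _ = (1/2)*(C + C/2*C^2) * Real.exp (-s) := by ring
  have hint1 : IntegrableOn (fun s => Real.exp (-s) * (φ s ^ 2 - m s ^ 2 / 2)) (Ioi (0:ℝ)) := by
    refine Integrable.mono' (hexpInt.const_mul (C'^2 + C'^2/2)) ?_ ?_
    · exact ((Real.continuous_exp.comp continuous_neg).mul
        ((hφc.pow 2).sub ((hmc.pow 2).div_const 2))).aestronglyMeasurable.restrict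
    · refine Filter.Eventually.of_forall fun s => ?_
      have he := (Real.exp_pos (-s)).le
      have hφ2 : φ s ^ 2 ≤ C' ^ 2 := by
        have := (hφb s).trans (le_max_left Cφ C)
        exact pow_le_pow_left₀ (hφ0 s) this 2
      have hm2 : m s ^ 2 ≤ C' ^ 2 := by
        have hm1 := abs_le.mp ((hmb s).trans (le_max_right Cφ C))
        exact sq_le_sq' hm1.1 hm1.2
      have h1 : |φ s ^ 2 - m s ^ 2 / 2| ≤ C'^2 + C'^2/2 := by
        rw [abs_le]
        constructor <;> nlinarith [sq_nonneg (φ s), sq_nonneg (m s)]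
      have heq : ‖Real.exp (-s) * (φ s ^ 2 - m s ^ 2 / 2)‖
          = Real.exp (-s) * |φ s ^ 2 - m s ^ 2 / 2| := by
        rw [Real.norm_eq_abs, abs_mul, abs_of_pos (Real.exp_pos _)]
      rw [heq]
      calc Real.exp (-s) * |φ s ^ 2 - m s ^ 2 / 2| ≤ Real.exp (-s) * (C'^2 + C'^2/2) :=
            mul_le_mul_of_nonneg_left h1 he
        _ = (C'^2 + C'^2/2) * Real.exp (-s) := by ring
  have hintB : IntegrableOn (fun s => (1/2)*M*Real.exp (-s)
      - (γ/2)*(Real.exp (-s) * (φ s ^ 2 - m s ^ 2 / 2))) (Ioi (0:ℝ)) :=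
    (hexpInt.const_mul _).sub (hint1.const_mul _)
  -- pointwise comparison
  have hptw : ∀ s ∈ Ioi (0:ℝ),
      (1/2)*M*Real.exp (-s) - (γ/2)*(Real.exp (-s) * (φ s ^ 2 - m s ^ 2 / 2))
      ≤ (1/2)*Real.exp (-s) * (g (w s) + q s/2 * (m s)^2) := by
    intro s _
    have hgs := hgφ s
    have hqs := hq s
    have he := (Real.exp_pos (-s)).le
    have hkey : (1/2)*Real.exp (-s) * (g (w s) + q s/2 * (m s)^2)
        - ((1/2)*M*Real.exp (-s) - (γ/2)*(Real.exp (-s) * (φ s ^ 2 - m s ^ 2 / 2)))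
        = Real.exp (-s) * (m s ^ 2 * (q s - γ))/4 := by
      rw [hgs]; ring
    have hnn : (0:ℝ) ≤ Real.exp (-s) * (m s ^ 2 * (q s - γ))/4 := by
      have h1 : (0:ℝ) ≤ m s ^ 2 * (q s - γ) := mul_nonneg (sq_nonneg _) (by linarith)
      positivity
    linarith
  -- put everything together
  have hBint : ∫ s in Ioi (0:ℝ), ((1/2)*M*Real.exp (-s)
      - (γ/2)*(Real.exp (-s) * (φ s ^ 2 - m s ^ 2 / 2)))
      = (1/2)*M - (γ/2)*(∫ s in Ioi (0:ℝ), Real.exp (-s) * (φ s ^ 2 - m s ^ 2 / 2)) := by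
    rw [integral_sub (hexpInt.const_mul _) (hint1.const_mul _), integral_const_mul,
      integral_const_mul, integral_exp_neg_Ioi_zero]
    ring
  have hmono := setIntegral_mono_on hintB hintA measurableSet_Ioi hptw
  rw [hBint] at hmono
  have hγφ : γ * (φ 0)^2 = M - g (w 0) := by
    have := hgφ 0
    linarith
  have hfin : (α/2)*(g (w 0) - M) + M/2
      ≤ (1/2)*M - (γ/2)*(∫ s in Ioi (0:ℝ), Real.exp (-s) * (φ s ^ 2 - m s ^ 2 / 2)) := by
    have h2 : (γ/2)*(∫ s in Ioi (0:ℝ), Real.exp (-s) * (φ s ^ 2 - m s ^ 2 / 2))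
        ≤ (γ/2)*(α * (φ 0)^2) := mul_le_mul_of_nonneg_left hcore' (by linarith)
    have h3 : (γ/2)*(α*(φ 0)^2) = (α/2)*(M - g (w 0)) := by
      have : α * (γ * (φ 0)^2) = α * (M - g (w 0)) := by rw [hγφ]
      linarith [this]
    nlinarith [h2, h3]
  linarith

/-- Convolution estimate, maximum case (Lemma 2.3(2)): for either choice of the
half-line indicator, `(p 1_{ℝ^±}) * (g(u) + f''(u)/2 u'²) ≥ (α/2)(g(u) - M) + M/2`. -/
theorem convolution_estimate_max
    (γ : ℝ) (hγ : 0 < γ)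
    (f : ℝ → ℝ) (hf : ContDiff ℝ 2 f) (hconv : ∀ x : ℝ, γ ≤ deriv (deriv f) x)
    (g : ℝ → ℝ) (hg : Continuous g)
    (c M : ℝ) (hgc : g c = M) (hmax : ∀ x : ℝ, g x ≤ M)
    (K : ℝ) (hK0 : 0 < K) (hK1 : K ≤ 1 / Real.sqrt 8)
    (ψ : ℝ → ℝ) (hψ : ∀ x : ℝ, ψ x = Real.sqrt ((M - g x) / γ))
    (hLip : ∀ a b : ℝ, |ψ a - ψ b| ≤ K * |a - b|)
    (α : ℝ) (hα : α = (1 - Real.sqrt (1 - 8 * K ^ 2)) / (4 * K ^ 2))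
    (u : ℝ → ℝ) (hu : ContDiff ℝ 1 u)
    (hbd : ∃ C : ℝ, ∀ x : ℝ, |u x| ≤ C ∧ |deriv u x| ≤ C) :
    ∀ x : ℝ,
      (α / 2) * (g (u x) - M) + M / 2 ≤
        ∫ y : ℝ, pker (x - y) * Set.indicator (Set.Ioi (0 : ℝ)) (fun _ => (1 : ℝ)) (x - y) *
          (g (u y) + deriv (deriv f) (u y) / 2 * (deriv u y) ^ 2) ∧
      (α / 2) * (g (u x) - M) + M / 2 ≤
        ∫ y : ℝ, pker (x - y) * Set.indicator (Set.Iio (0 : ℝ)) (fun _ => (1 : ℝ)) (x - y) *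
          (g (u y) + deriv (deriv f) (u y) / 2 * (deriv u y) ^ 2) := by
  intro x
  -- properties of α
  have h8 : (0:ℝ) < Real.sqrt 8 := Real.sqrt_pos.mpr (by norm_num)
  have hK2 : 8 * K^2 ≤ 1 := by
    have h2 : K^2 ≤ (1/Real.sqrt 8)^2 := pow_le_pow_left₀ hK0.le hK1 2
    have h3 : (1/Real.sqrt 8)^2 = 1/8 := by
      rw [div_pow, one_pow, Real.sq_sqrt (by norm_num : (0:ℝ) ≤ 8)]
    nlinarith
  have hnn : (0:ℝ) ≤ 1 - 8*K^2 := by linarith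
  have hs2 : (Real.sqrt (1 - 8*K^2))^2 = 1 - 8*K^2 := Real.sq_sqrt hnn
  have hs0 : 0 ≤ Real.sqrt (1 - 8*K^2) := Real.sqrt_nonneg _
  have hs1 : Real.sqrt (1 - 8*K^2) ≤ 1 := by nlinarith
  have hα0 : 0 ≤ α := by
    rw [hα]
    have : (0:ℝ) < 4*K^2 := by positivity
    apply div_nonneg <;> [skip; positivity]
    have : 1 - 8*K^2 ≤ 1 := by nlinarith
    linarith [hs1]
  have hαeq : 2*K^2*α^2 - α + 1 = 0 := by
    have hk : (4*K^2) ≠ 0 := by positivity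
    rw [hα]
    field_simp
    have e : (1:ℝ) - K^2*8 = 1 - 8*K^2 := by ring
    rw [e]
    nlinarith [hs2]
  -- constants and continuity
  obtain ⟨C, hC⟩ := hbd
  have hC0 : 0 ≤ C := le_trans (abs_nonneg _) (hC 0).1
  have hucont : Continuous u := hu.continuous
  have hu'c : Continuous (deriv u) := hu.continuous_deriv le_rfl
  have hudiff : Differentiable ℝ u := hu.differentiable one_ne_zero
  have hf1 : ContDiff ℝ (1+1) f := by norm_num; exact hf
  have hf'1 : ContDiff ℝ 1 (deriv f) := (contDiff_succ_iff_deriv.mp hf1).2.2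
  have hf''c : Continuous (deriv (deriv f)) := hf'1.continuous_deriv le_rfl
  obtain ⟨Cg, hCg⟩ := (isCompact_Icc (a := -C) (b := C)).exists_bound_of_continuousOn
    hg.continuousOn
  obtain ⟨Cf, hCf⟩ := (isCompact_Icc (a := -C) (b := C)).exists_bound_of_continuousOn
    hf''c.continuousOn
  set C₀ : ℝ := max C (max Cg (max Cf γ)) with hC₀def
  have hmemu : ∀ z : ℝ, u z ∈ Icc (-C) C := by
    intro z
    have := abs_le.mp (hC z).1
    exact ⟨this.1, this.2⟩
  have hbC : C ≤ C₀ := le_max_left _ _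
  have hbCg : Cg ≤ C₀ := le_trans (le_max_left _ _) (le_max_right _ _)
  have hbCf : Cf ≤ C₀ := le_trans (le_trans (le_max_left _ _) (le_max_right _ _))
    (le_max_right _ _)
  have hmb : ∀ z : ℝ, |deriv u z| ≤ C₀ := fun z => le_trans (hC z).2 hbC
  have hqb : ∀ z : ℝ, |deriv (deriv f) (u z)| ≤ C₀ := fun z =>
    le_trans (hCf _ (hmemu z)) hbCf
  have hgb : ∀ z : ℝ, |g (u z)| ≤ C₀ := fun z => le_trans (hCg _ (hmemu z)) hbCg
  -- FTC estimates
  have hwplus : ∀ s, 0 ≤ s → |u (x + s) - u x| ≤ ∫ t in (0:ℝ)..s, |deriv u (x + t)| := by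
    intro s hs
    have hch : ∫ t in (0:ℝ)..s, |deriv u (x + t)| = ∫ t in x..(x+s), |deriv u t| := by
      rw [intervalIntegral.integral_comp_add_left (fun t => |deriv u t|) x, add_zero]
    have hftc : ∫ t in x..(x+s), deriv u t = u (x+s) - u x :=
      intervalIntegral.integral_deriv_eq_sub (fun t _ => hudiff t)
        (hu'c.intervalIntegrable _ _)
    rw [hch, ← hftc]
    exact intervalIntegral.abs_integral_le_integral_abs (by linarith)
  have hwminus : ∀ s, 0 ≤ s → |u (x - s) - u x| ≤ ∫ t in (0:ℝ)..s, |deriv u (x - t)| := by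
    intro s hs
    have hch : ∫ t in (0:ℝ)..s, |deriv u (x - t)| = ∫ t in (x-s)..x, |deriv u t| := by
      rw [intervalIntegral.integral_comp_sub_left (fun t => |deriv u t|) x, sub_zero]
    have hftc : ∫ t in (x-s)..x, deriv u t = u x - u (x-s) :=
      intervalIntegral.integral_deriv_eq_sub (fun t _ => hudiff t)
        (hu'c.intervalIntegrable _ _)
    rw [hch, abs_sub_comm, ← hftc]
    exact intervalIntegral.abs_integral_le_integral_abs (by linarith)
  constructor
  · -- Ioi case
    have hcov : (∫ y : ℝ, pker (x - y) * Set.indicator (Set.Ioi (0 : ℝ)) (fun _ => (1 : ℝ)) (x - y) *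
          (g (u y) + deriv (deriv f) (u y) / 2 * (deriv u y) ^ 2))
        = ∫ s in Ioi (0:ℝ), (1/2)*Real.exp (-s) *
            (g (u (x - s)) + deriv (deriv f) (u (x - s)) / 2 * (deriv u (x - s)) ^ 2) := by
      rw [← integral_sub_left_eq_self (fun y : ℝ =>
        pker (x - y) * Set.indicator (Set.Ioi (0 : ℝ)) (fun _ => (1 : ℝ)) (x - y) *
          (g (u y) + deriv (deriv f) (u y) / 2 * (deriv u y) ^ 2)) volume x,
        ← integral_indicator measurableSet_Ioi]
      congr 1
      funext s
      beta_reduce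
      rw [sub_sub_cancel]
      by_cases hs : s ∈ Ioi (0:ℝ)
      · have hpos : (0:ℝ) < s := hs
        rw [Set.indicator_of_mem hs, Set.indicator_of_mem hs]
        simp only [pker]
        rw [abs_of_pos hpos]
        ring
      · rw [Set.indicator_of_notMem hs, Set.indicator_of_notMem hs]
        ring
    rw [hcov]
    have := conv_onesided γ hγ g hg M hmax K α hK0 hα0 hαeq ψ hψ hLip
      (fun s => u (x - s)) (fun s => deriv u (x - s))
      (fun s => deriv (deriv f) (u (x - s)))
      (hucont.comp (continuous_const.sub continuous_id))
      (hu'c.comp (continuous_const.sub continuous_id))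
      (hf''c.comp (hucont.comp (continuous_const.sub continuous_id)))
      C₀ (fun s => hmb _) (fun s => hqb _) (fun s => hconv _) (fun s => hgb _)
      (by intro s hs; simpa [sub_zero] using hwminus s hs)
    simpa [sub_zero] using this
  · -- Iio case
    have hcov : (∫ y : ℝ, pker (x - y) * Set.indicator (Set.Iio (0 : ℝ)) (fun _ => (1 : ℝ)) (x - y) *
          (g (u y) + deriv (deriv f) (u y) / 2 * (deriv u y) ^ 2))
        = ∫ s in Ioi (0:ℝ), (1/2)*Real.exp (-s) *
            (g (u (x + s)) + deriv (deriv f) (u (x + s)) / 2 * (deriv u (x + s)) ^ 2) := by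
      rw [← integral_add_left_eq_self (fun y : ℝ =>
        pker (x - y) * Set.indicator (Set.Iio (0 : ℝ)) (fun _ => (1 : ℝ)) (x - y) *
          (g (u y) + deriv (deriv f) (u y) / 2 * (deriv u y) ^ 2)) x,
        ← integral_indicator measurableSet_Ioi]
      congr 1
      funext s
      beta_reduce
      have hxs : x - (x + s) = -s := by ring
      rw [hxs]
      by_cases hs : s ∈ Ioi (0:ℝ)
      · have hpos : (0:ℝ) < s := hs
        have hmem : -s ∈ Iio (0:ℝ) := by simpa using hpos
        rw [Set.indicator_of_mem hmem, Set.indicator_of_mem hs]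
        simp only [pker]
        rw [abs_neg, abs_of_pos hpos]
        ring
      · have hpos' : ¬ (0:ℝ) < s := fun h => hs h
        have hnm : -s ∉ Iio (0:ℝ) := by
          intro h
          exact hpos' (by simpa using h)
        rw [Set.indicator_of_notMem hnm, Set.indicator_of_notMem hs]
        ring
    rw [hcov]
    have := conv_onesided γ hγ g hg M hmax K α hK0 hα0 hαeq ψ hψ hLip
      (fun s => u (x + s)) (fun s => deriv u (x + s))
      (fun s => deriv (deriv f) (u (x + s)))
      (hucont.comp (continuous_const.add continuous_id))
      (hu'c.comp (continuous_const.add continuous_id))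
      (hf''c.comp (hucont.comp (continuous_const.add continuous_id)))
      C₀ (fun s => hmb _) (fun s => hqb _) (fun s => hconv _) (fun s => hgb _)
      (by intro s hs; simpa [add_zero] using hwplus s hs)
    simpa [add_zero] using this
end

section
/- Sign persistence for the Riccati-type system (step in the proof of Theorem 1.2). Let γ > 0, T > 0, and let A, B : [0,T) → ℝ be differentiable functions such that A(0) > 0, B(0) < 0, and for all t ∈ [0,T): A'(t) ≥ −(γ/2) A(t) B(t) and B'(t) ≤ (γ/2) A(t) B(t). Then for every t ∈ [0,T) one has A(t) ≥ A(0) > 0 and B(t) ≤ B(0) < 0. -/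
open Set

/-- Sign persistence for the Riccati-type system: if `A(0) > 0 > B(0)` and
`A' ≥ -(γ/2) A B`, `B' ≤ (γ/2) A B` on `[0,T)`, then `A(t) ≥ A(0) > 0` and
`B(t) ≤ B(0) < 0` for all `t ∈ [0,T)`. -/
theorem riccati_sign_persistence
    (γ : ℝ) (hγ : 0 < γ) (T : ℝ) (hT : 0 < T)
    (A B A' B' : ℝ → ℝ)
    (hA : ∀ t ∈ Set.Ico (0 : ℝ) T, HasDerivWithinAt A (A' t) (Set.Ico 0 T) t)
    (hB : ∀ t ∈ Set.Ico (0 : ℝ) T, HasDerivWithinAt B (B' t) (Set.Ico 0 T) t)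
    (hA0 : 0 < A 0) (hB0 : B 0 < 0)
    (hA' : ∀ t ∈ Set.Ico (0 : ℝ) T, -(γ / 2) * (A t * B t) ≤ A' t)
    (hB' : ∀ t ∈ Set.Ico (0 : ℝ) T, B' t ≤ (γ / 2) * (A t * B t)) :
    ∀ t ∈ Set.Ico (0 : ℝ) T, A 0 ≤ A t ∧ B t ≤ B 0 := by
  intro t ht
  obtain ⟨ht0, htT⟩ := ht
  set G : Set ℝ := {s | s ∈ Icc 0 t ∧ ∀ r ∈ Icc 0 s, A 0 ≤ A r ∧ B r ≤ B 0} with hGdef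
  have h0G : (0:ℝ) ∈ G := by
    refine ⟨⟨le_refl 0, ht0⟩, ?_⟩
    intro r hr
    have hr0 : r = 0 := le_antisymm hr.2 hr.1
    simp [hr0]
  have hbdd : BddAbove G := ⟨t, fun s hs => hs.1.2⟩
  set u := sSup G with hu
  have hu0 : 0 ≤ u := le_csSup hbdd h0G
  have hut : u ≤ t := csSup_le ⟨0, h0G⟩ (fun s hs => hs.1.2)
  have huT : u < T := lt_of_le_of_lt hut htT
  have huIco : u ∈ Ico (0:ℝ) T := ⟨hu0, huT⟩
  -- all r < u satisfy the property
  have hlt : ∀ r, 0 ≤ r → r < u → A 0 ≤ A r ∧ B r ≤ B 0 := by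
    intro r hr0 hru
    obtain ⟨s, hsG, hrs⟩ := exists_lt_of_lt_csSup ⟨0, h0G⟩ hru
    exact hsG.2 r ⟨hr0, hrs.le⟩
  -- u itself satisfies the property (continuity)
  have huG : u ∈ G := by
    refine ⟨⟨hu0, hut⟩, ?_⟩
    intro r hr
    rcases lt_or_eq_of_le hr.2 with h | h
    · exact hlt r hr.1 h
    · subst h
      rcases eq_or_lt_of_le hu0 with h0 | h0
      · constructor <;> simp [← h0]
      · haveI : (nhdsWithin u (Ico 0 u)).NeBot := by
          rw [← mem_closure_iff_nhdsWithin_neBot, closure_Ico h0.ne]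
          exact ⟨hu0, le_refl u⟩
        have hsub : Ico (0:ℝ) u ⊆ Ico 0 T := Ico_subset_Ico le_rfl huT.le
        have hAc : ContinuousWithinAt A (Ico 0 u) u :=
          ((hA u huIco).continuousWithinAt).mono hsub
        have hBc : ContinuousWithinAt B (Ico 0 u) u :=
          ((hB u huIco).continuousWithinAt).mono hsub
        have evA : ∀ᶠ x in nhdsWithin u (Ico 0 u), A 0 ≤ A x :=
          eventually_mem_nhdsWithin.mono (fun x hx => (hlt x hx.1 hx.2).1)
        have evB : ∀ᶠ x in nhdsWithin u (Ico 0 u), B x ≤ B 0 :=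
          eventually_mem_nhdsWithin.mono (fun x hx => (hlt x hx.1 hx.2).2)
        exact ⟨ge_of_tendsto hAc evA, le_of_tendsto hBc evB⟩
  -- u = t, else we can extend
  have hueq : u = t := by
    by_contra hne
    have hult : u < t := lt_of_le_of_ne hut hne
    have hAu : 0 < A u := lt_of_lt_of_le hA0 (huG.2 u ⟨hu0, le_rfl⟩).1
    have hBu : B u < 0 := lt_of_le_of_lt (huG.2 u ⟨hu0, le_rfl⟩).2 hB0
    have hAc : ContinuousWithinAt A (Ico 0 T) u := (hA u huIco).continuousWithinAt
    have hBc : ContinuousWithinAt B (Ico 0 T) u := (hB u huIco).continuousWithinAt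
    have ev : ∀ᶠ x in nhdsWithin u (Ico 0 T), 0 < A x ∧ B x < 0 :=
      (hAc.eventually (eventually_gt_nhds hAu)).and
        (hBc.eventually (eventually_lt_nhds hBu))
    rw [eventually_nhdsWithin_iff] at ev
    obtain ⟨ε, hε, hball⟩ := Metric.eventually_nhds_iff.mp ev
    set v := min (u + ε / 2) t with hv
    have huv : u < v := lt_min (by linarith) hult
    have hvt : v ≤ t := min_le_right _ _
    have hvT : v < T := lt_of_le_of_lt hvt htT
    have hgood : ∀ s ∈ Icc u v, (0 < A s ∧ B s < 0) ∧ s ∈ Ico (0:ℝ) T := by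
      intro s hs
      have hs0 : (0:ℝ) ≤ s := le_trans hu0 hs.1
      have hsT : s < T := lt_of_le_of_lt (le_trans hs.2 hvt) htT
      have hd : dist s u < ε := by
        rw [Real.dist_eq, abs_lt]
        constructor
        · linarith [hs.1]
        · have : s ≤ u + ε / 2 := le_trans hs.2 (min_le_left _ _)
          linarith
      exact ⟨hball hd ⟨hs0, hsT⟩, hs0, hsT⟩
    -- A monotone on Icc u v, B antitone
    have hconvex : Convex ℝ (Icc u v) := convex_Icc u v
    have hcontA : ContinuousOn A (Icc u v) := fun s hs =>
      ((hA s (hgood s hs).2).continuousWithinAt).mono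
        (fun x hx => ((hgood x hx).2))
    have hcontB : ContinuousOn B (Icc u v) := fun s hs =>
      ((hB s (hgood s hs).2).continuousWithinAt).mono
        (fun x hx => ((hgood x hx).2))
    have hderivA : ∀ s ∈ interior (Icc u v), HasDerivAt A (A' s) s := by
      intro s hs
      rw [interior_Icc] at hs
      refine (hA s (hgood s ⟨hs.1.le, hs.2.le⟩).2).hasDerivAt ?_
      exact Ico_mem_nhds (lt_of_le_of_lt hu0 hs.1) (lt_of_lt_of_le hs.2 hvT.le)
    have hderivB : ∀ s ∈ interior (Icc u v), HasDerivAt B (B' s) s := by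
      intro s hs
      rw [interior_Icc] at hs
      refine (hB s (hgood s ⟨hs.1.le, hs.2.le⟩).2).hasDerivAt ?_
      exact Ico_mem_nhds (lt_of_le_of_lt hu0 hs.1) (lt_of_lt_of_le hs.2 hvT.le)
    have hmonoA : MonotoneOn A (Icc u v) := by
      refine monotoneOn_of_deriv_nonneg hconvex hcontA
        (fun s hs => (hderivA s hs).differentiableAt.differentiableWithinAt) ?_
      intro s hs
      rw [(hderivA s hs).deriv]
      have hsIcc : s ∈ Icc u v := by
        rw [interior_Icc] at hs; exact ⟨hs.1.le, hs.2.le⟩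
      have h1 := hA' s (hgood s hsIcc).2
      have h2 := (hgood s hsIcc).1
      have hp : 0 < -(A s * B s) := by nlinarith [h2.1, h2.2]
      nlinarith [mul_pos (by linarith : (0:ℝ) < γ / 2) hp]
    have hantiB : AntitoneOn B (Icc u v) := by
      refine antitoneOn_of_deriv_nonpos hconvex hcontB
        (fun s hs => (hderivB s hs).differentiableAt.differentiableWithinAt) ?_
      intro s hs
      rw [(hderivB s hs).deriv]
      have hsIcc : s ∈ Icc u v := by
        rw [interior_Icc] at hs; exact ⟨hs.1.le, hs.2.le⟩
      have h1 := hB' s (hgood s hsIcc).2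
      have h2 := (hgood s hsIcc).1
      have hp : 0 < -(A s * B s) := by nlinarith [h2.1, h2.2]
      nlinarith [mul_pos (by linarith : (0:ℝ) < γ / 2) hp]
    have hvG : v ∈ G := by
      refine ⟨⟨le_trans hu0 huv.le, hvt⟩, ?_⟩
      intro r hr
      rcases le_or_gt r u with hru | hru
      · exact huG.2 r ⟨hr.1, hru⟩
      · have hrIcc : r ∈ Icc u v := ⟨hru.le, hr.2⟩
        have hAr : A u ≤ A r := hmonoA ⟨le_rfl, huv.le⟩ hrIcc hru.le
        have hBr : B r ≤ B u := hantiB ⟨le_rfl, huv.le⟩ hrIcc hru.le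
        exact ⟨le_trans (huG.2 u ⟨hu0, le_rfl⟩).1 hAr,
          le_trans hBr (huG.2 u ⟨hu0, le_rfl⟩).2⟩
    exact absurd (le_csSup hbdd hvG) (not_le.mpr huv)
  have := huG.2 t ⟨ht0, hueq ▸ le_rfl⟩
  exact this
end

section
/- Finite-time blow-up for the Riccati-type system (step in the proof of Theorem 1.2). Let γ > 0, T > 0, and let A, B : [0,T) → ℝ be differentiable functions such that A(0) > 0, B(0) < 0, and for all t ∈ [0,T): A'(t) ≥ −(γ/2) A(t) B(t) and B'(t) ≤ (γ/2) A(t) B(t). Then T ≤ 2 / ( γ √( −A(0) B(0) ) ). -/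
open Set

/-- Finite-time blow-up for the Riccati-type system: if `A(0) > 0 > B(0)` and
`A' ≥ -(γ/2) A B`, `B' ≤ (γ/2) A B` on `[0,T)`, then `T ≤ 2/(γ √(-A(0)B(0)))`. -/
theorem riccati_blowup
    (γ : ℝ) (hγ : 0 < γ) (T : ℝ) (hT : 0 < T)
    (A B A' B' : ℝ → ℝ)
    (hA : ∀ t ∈ Set.Ico (0 : ℝ) T, HasDerivWithinAt A (A' t) (Set.Ico 0 T) t)
    (hB : ∀ t ∈ Set.Ico (0 : ℝ) T, HasDerivWithinAt B (B' t) (Set.Ico 0 T) t)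
    (hA0 : 0 < A 0) (hB0 : B 0 < 0)
    (hA' : ∀ t ∈ Set.Ico (0 : ℝ) T, -(γ / 2) * (A t * B t) ≤ A' t)
    (hB' : ∀ t ∈ Set.Ico (0 : ℝ) T, B' t ≤ (γ / 2) * (A t * B t)) :
    T ≤ 2 / (γ * Real.sqrt (-(A 0 * B 0))) := by
  have contA : ContinuousOn A (Set.Ico 0 T) := fun t ht => (hA t ht).continuousWithinAt
  have contB : ContinuousOn B (Set.Ico 0 T) := fun t ht => (hB t ht).continuousWithinAt
  have key : ∀ τ ∈ Set.Ico (0 : ℝ) T, τ < 2 / (γ * Real.sqrt (-(A 0 * B 0))) := by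
    intro τ hτ
    have hsub : Set.Icc (0:ℝ) τ ⊆ Set.Ico 0 T :=
      fun x hx => ⟨hx.1, lt_of_le_of_lt hx.2 hτ.2⟩
    -- positivity on [0, τ]
    have pos : ∀ t ∈ Set.Icc (0:ℝ) τ, 0 < A t ∧ B t < 0 := by
      by_contra h
      push_neg at h
      obtain ⟨t0, ht0, ht0'⟩ := h
      have hF : (Set.Icc (0:ℝ) τ ∩ {t | A t ≤ 0 ∨ 0 ≤ B t}).Nonempty := by
        refine ⟨t0, ht0, ?_⟩
        by_cases hAt : 0 < A t0
        · exact Or.inr (ht0' hAt)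
        · exact Or.inl (not_lt.1 hAt)
      set F := Set.Icc (0:ℝ) τ ∩ {t | A t ≤ 0 ∨ 0 ≤ B t} with hFdef
      have hFclosed : IsClosed F := by
        have h1 : IsClosed (Set.Icc (0:ℝ) τ ∩ A ⁻¹' Set.Iic 0) :=
          (contA.mono hsub).preimage_isClosed_of_isClosed isClosed_Icc isClosed_Iic
        have h2 : IsClosed (Set.Icc (0:ℝ) τ ∩ B ⁻¹' Set.Ici 0) :=
          (contB.mono hsub).preimage_isClosed_of_isClosed isClosed_Icc isClosed_Ici
        have : F = (Set.Icc (0:ℝ) τ ∩ A ⁻¹' Set.Iic 0) ∪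
            (Set.Icc (0:ℝ) τ ∩ B ⁻¹' Set.Ici 0) := by
          ext x
          simp only [hFdef, Set.mem_inter_iff, Set.mem_union, Set.mem_setOf_eq,
            Set.mem_preimage, Set.mem_Iic, Set.mem_Ici]
          tauto
        rw [this]
        exact h1.union h2
      have hbdd : BddBelow F := ⟨0, fun x hx => hx.1.1⟩
      set c := sInf F with hcdef
      have hcF : c ∈ F := hFclosed.csInf_mem hF hbdd
      have hc0 : 0 ≤ c := hcF.1.1
      have hcτ : c ≤ τ := hcF.1.2
      have hcpos : 0 < c := by
        rcases hc0.lt_or_eq with h | h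
        · exact h
        · exfalso
          rcases hcF.2 with h' | h' <;> rw [← h] at h' <;> linarith
      -- on [0, c), positivity holds
      have posc : ∀ t ∈ Set.Ico (0:ℝ) c, 0 < A t ∧ B t < 0 := by
        intro t ht
        by_contra h'
        have htF : t ∈ F := by
          refine ⟨⟨ht.1, le_trans ht.2.le hcτ⟩, ?_⟩
          rcases not_and_or.1 h' with h'' | h''
          · exact Or.inl (not_lt.1 h'')
          · exact Or.inr (not_lt.1 h'')
        exact absurd (csInf_le hbdd htF) (not_le.2 ht.2)
      have hsubc : Set.Icc (0:ℝ) c ⊆ Set.Ico 0 T :=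
        fun x hx => hsub ⟨hx.1, le_trans hx.2 hcτ⟩
      have hsubc' : Set.Ioo (0:ℝ) c ⊆ Set.Ico 0 T :=
        fun x hx => hsubc ⟨hx.1.le, hx.2.le⟩
      have hmonoA : MonotoneOn A (Set.Icc 0 c) := by
        apply monotoneOn_of_hasDerivWithinAt_nonneg (convex_Icc 0 c)
          (contA.mono hsubc) (f' := A')
        · intro x hx
          rw [interior_Icc] at hx
          exact ((hA x (hsubc' hx)).mono (by rw [interior_Icc]; exact hsubc'))
        · intro x hx
          rw [interior_Icc] at hx
          obtain ⟨ha, hb⟩ := posc x ⟨hx.1.le, hx.2⟩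
          have := hA' x (hsubc' hx)
          nlinarith [mul_nonneg (by linarith : (0:ℝ) ≤ γ/2) (mul_pos ha (neg_pos.2 hb)).le]
      have hantiB : AntitoneOn B (Set.Icc 0 c) := by
        apply antitoneOn_of_hasDerivWithinAt_nonpos (convex_Icc 0 c)
          (contB.mono hsubc) (f' := B')
        · intro x hx
          rw [interior_Icc] at hx
          exact ((hB x (hsubc' hx)).mono (by rw [interior_Icc]; exact hsubc'))
        · intro x hx
          rw [interior_Icc] at hx
          obtain ⟨ha, hb⟩ := posc x ⟨hx.1.le, hx.2⟩
          have := hB' x (hsubc' hx)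
          nlinarith [mul_nonneg (by linarith : (0:ℝ) ≤ γ/2) (mul_pos ha (neg_pos.2 hb)).le]
      have hAc : A 0 ≤ A c := hmonoA ⟨le_refl 0, hc0⟩ ⟨hc0, le_refl c⟩ hc0
      have hBc : B c ≤ B 0 := hantiB ⟨le_refl 0, hc0⟩ ⟨hc0, le_refl c⟩ hc0
      rcases hcF.2 with h' | h' <;> linarith
    -- the Riccati comparison function
    set u : ℝ → ℝ := fun t => (Real.sqrt (A t * -B t))⁻¹ + γ / 2 * t with hu
    have hanti : AntitoneOn u (Set.Icc 0 τ) := by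
      apply antitoneOn_of_hasDerivWithinAt_nonpos (convex_Icc 0 τ)
        (f' := fun t => -((A' t * -B t + A t * -B' t) / (2 * Real.sqrt (A t * -B t))) /
          (Real.sqrt (A t * -B t)) ^ 2 + γ / 2)
      · apply ContinuousOn.add
        · apply ContinuousOn.inv₀
          · exact ((contA.mono hsub).mul (contB.mono hsub).neg).sqrt
          · intro x hx
            obtain ⟨ha, hb⟩ := pos x hx
            exact ne_of_gt (Real.sqrt_pos.2 (by nlinarith))
        · exact (continuousOn_id.const_smul (γ/2)).congr (fun x _ => by simp [smul_eq_mul])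
      · intro x hx
        rw [interior_Icc] at hx
        have hxm : x ∈ Set.Ico (0:ℝ) T := hsub ⟨hx.1.le, hx.2.le⟩
        have hIoo : Set.Ioo (0:ℝ) τ ⊆ Set.Ico 0 T := fun y hy => hsub ⟨hy.1.le, hy.2.le⟩
        obtain ⟨ha, hb⟩ := pos x ⟨hx.1.le, hx.2.le⟩
        have hWx : (0:ℝ) < A x * -B x := mul_pos ha (neg_pos.2 hb)
        have hWd : HasDerivWithinAt (fun t => A t * -B t)
            (A' x * -B x + A x * -B' x) (Set.Ioo 0 τ) x :=
          ((hA x hxm).mono hIoo).mul ((hB x hxm).mono hIoo).neg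
        have hsq := hWd.sqrt (ne_of_gt hWx)
        have hinv := hsq.inv (ne_of_gt (Real.sqrt_pos.2 hWx))
        have hlin : HasDerivWithinAt (fun t : ℝ => γ / 2 * t) (γ / 2) (Set.Ioo 0 τ) x := by
          simpa using (hasDerivWithinAt_id x (Set.Ioo 0 τ)).const_mul (γ/2)
        rw [interior_Icc, hu]
        exact hinv.add hlin
      · intro x hx
        rw [interior_Icc] at hx
        have hxm : x ∈ Set.Ico (0:ℝ) T := hsub ⟨hx.1.le, hx.2.le⟩
        obtain ⟨ha, hb⟩ := pos x ⟨hx.1.le, hx.2.le⟩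
        have hb' : 0 < -B x := neg_pos.2 hb
        have hWx : (0:ℝ) < A x * -B x := mul_pos ha hb'
        set s := Real.sqrt (A x * -B x) with hs
        have hspos : 0 < s := Real.sqrt_pos.2 hWx
        have hs2 : s ^ 2 = A x * -B x := Real.sq_sqrt hWx.le
        -- AM-GM : 2s ≤ A x + (-B x)
        have hamgm : 2 * s ≤ A x + -B x := by nlinarith [sq_nonneg (A x - -B x)]
        have hA'x := hA' x hxm
        have hB'x := hB' x hxm
        -- W' ≥ γ s^3
        have hW' : γ * s ^ 3 ≤ A' x * -B x + A x * -B' x := by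
          have hcube : γ * s ^ 3 = γ / 2 * (A x * -B x) * (2 * s) := by
            have h3 : s ^ 3 = s ^ 2 * s := by ring
            rw [h3, hs2]; ring
          rw [hcube]
          have h1 : γ / 2 * (A x * -B x) * (2 * s) ≤ γ / 2 * (A x * -B x) * (A x + -B x) :=
            mul_le_mul_of_nonneg_left hamgm
              (mul_nonneg (by linarith : (0:ℝ) ≤ γ / 2) hWx.le)
          have h2 : -(γ / 2) * (A x * B x) * -B x ≤ A' x * -B x :=
            mul_le_mul_of_nonneg_right hA'x hb'.le
          have h4 : A x * -(γ / 2 * (A x * B x)) ≤ A x * -B' x :=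
            mul_le_mul_of_nonneg_left (neg_le_neg hB'x) ha.le
          nlinarith [h1, h2, h4]
        have heq : -((A' x * -B x + A x * -B' x) / (2 * s)) / s ^ 2 + γ / 2 =
            (γ * s ^ 3 - (A' x * -B x + A x * -B' x)) / (2 * s ^ 3) := by
          field_simp
          ring
        rw [heq]
        apply div_nonpos_of_nonpos_of_nonneg
        · linarith
        · positivity
    have h0τ : (0:ℝ) ∈ Set.Icc (0:ℝ) τ := ⟨le_refl 0, hτ.1⟩
    have hττ : τ ∈ Set.Icc (0:ℝ) τ := ⟨hτ.1, le_refl τ⟩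
    have huτ := hanti h0τ hττ hτ.1
    obtain ⟨haτ, hbτ⟩ := pos τ hττ
    have hWτ : (0:ℝ) < A τ * -B τ := mul_pos haτ (neg_pos.2 hbτ)
    have huτpos : 0 < (Real.sqrt (A τ * -B τ))⁻¹ :=
      inv_pos.2 (Real.sqrt_pos.2 hWτ)
    have hW0 : (0:ℝ) < A 0 * -B 0 := mul_pos hA0 (neg_pos.2 hB0)
    have hs0 : Real.sqrt (-(A 0 * B 0)) = Real.sqrt (A 0 * -B 0) := by ring_nf
    have hs0pos : 0 < Real.sqrt (A 0 * -B 0) := Real.sqrt_pos.2 hW0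
    -- from u τ ≤ u 0 : γ/2 * τ < (√(A0 * -B0))⁻¹
    have hkey : γ / 2 * τ < (Real.sqrt (A 0 * -B 0))⁻¹ := by
      simp only [hu] at huτ
      simp only [mul_zero, add_zero] at huτ
      linarith
    rw [hs0, lt_div_iff₀ (by positivity : (0:ℝ) < γ * Real.sqrt (A 0 * -B 0))]
    have := mul_lt_mul_of_pos_right hkey hs0pos
    rw [inv_mul_cancel₀ (ne_of_gt hs0pos)] at this
    nlinarith
  by_contra hcon
  push_neg at hcon
  have hb0 : (0:ℝ) < 2 / (γ * Real.sqrt (-(A 0 * B 0))) := by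
    have : (0:ℝ) < -(A 0 * B 0) := by nlinarith [mul_pos hA0 (neg_pos.2 hB0)]
    positivity
  exact absurd (key _ ⟨hb0.le, hcon⟩) (lt_irrefl _)
end

section
/- Pointwise consequence of the convolution estimate used in inequality (3.3): under the hypotheses of the convolution estimate in the minimum case, the full convolution with p is bounded below. Let γ > 0, let f : ℝ → ℝ be twice continuously differentiable with f'' ≥ γ on ℝ, let g : ℝ → ℝ be continuous attaining its minimum m = min_ℝ g at some c ∈ ℝ, assume φ = √((g − m)/γ) is K-Lipschitz with 0 < K ≤ 1, and set α = (√(1+8K²) − 1)/(4K²). Let u : ℝ → ℝ be a bounded continuously differentiable function with bounded derivative u'. Then for every x ∈ ℝ, ( p * [ g(u) + (f''(u)/2) u'² ] )(x) ≥ α ( g(u(x)) − m ) + m, and consequently g(u(x)) − ( p * [ g(u) + (f''(u)/2) u'² ] )(x) ≤ (1 − α)( g(u(x)) − m ) = 2K²α² γ φ(u(x))². -/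
open MeasureTheory Set
lemma pker_nonneg (x : ℝ) : 0 ≤ pker x := by unfold pker; positivity

lemma pker_integrable : Integrable pker := by
  have h1 : IntegrableOn pker (Iic (0:ℝ)) := by
    apply IntegrableOn.congr_fun ((integrableOn_exp_Iic 0).const_mul (1/2)) _ measurableSet_Iic
    intro y hy
    simp only [pker, abs_of_nonpos (mem_Iic.mp hy), neg_neg]
  have h2 : IntegrableOn pker (Ioi (0:ℝ)) := by
    apply IntegrableOn.congr_fun ((exp_neg_integrableOn_Ioi 0 one_pos).const_mul (1/2)) _
      measurableSet_Ioi
    intro y hy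
    simp only [pker, abs_of_pos (mem_Ioi.mp hy), neg_mul, one_mul]
  rw [← integrableOn_univ, ← Iic_union_Ioi (a := (0:ℝ))]
  exact h1.union h2

lemma pker_neg (x : ℝ) : pker (-x) = pker x := by simp [pker]

lemma pker_cont : Continuous pker := by
  unfold pker; fun_prop

/-- integrability of pker times a bounded continuous function -/
lemma integrable_pker_mul (F : ℝ → ℝ) (hF : Continuous F) (C : ℝ) (hC : ∀ y, |F y| ≤ C) :
    Integrable (fun z : ℝ => pker z * F z) := by
  have := pker_integrable.bdd_mul hF.aestronglyMeasurable (Filter.Eventually.of_forall fun y => by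
    simpa [Real.norm_eq_abs] using hC y)
  simpa [mul_comm] using this

lemma integrable_pker_mul' (x : ℝ) (F : ℝ → ℝ) (hF : Continuous F) (C : ℝ) (hC : ∀ y, |F y| ≤ C) :
    Integrable (fun y : ℝ => pker (x - y) * F y) := by
  have h : Integrable (fun z : ℝ => pker z * F (x - z)) :=
    integrable_pker_mul _ (by fun_prop) C (fun y => hC _)
  simpa using h.comp_sub_left x

/-- Splitting the convolution integral into two half-line integrals. -/
lemma pker_split (x : ℝ) (Q : ℝ → ℝ) (hQ : Continuous Q) (C : ℝ) (hC : ∀ y, |Q y| ≤ C) :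
    (∫ y : ℝ, pker (x - y) * Q y) =
      (1/2) * (∫ t in Ioi (0:ℝ), Real.exp (-t) * Q (x + t)) +
      (1/2) * (∫ t in Ioi (0:ℝ), Real.exp (-t) * Q (x - t)) := by
  have hint : Integrable (fun z : ℝ => pker z * Q (x - z)) :=
    integrable_pker_mul _ (by fun_prop) C (fun y => hC _)
  have h1 : (∫ y : ℝ, pker (x - y) * Q y) = ∫ z : ℝ, pker z * Q (x - z) := by
    have := integral_sub_left_eq_self (fun z : ℝ => pker z * Q (x - z)) volume x
    simp only [sub_sub_cancel] at this
    exact this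
  have h2 : (∫ z : ℝ, pker z * Q (x - z)) =
      (∫ z in Iic (0:ℝ), pker z * Q (x - z)) + ∫ z in Ioi (0:ℝ), pker z * Q (x - z) :=
    (intervalIntegral.integral_Iic_add_Ioi hint.integrableOn hint.integrableOn).symm
  have h3 : (∫ z in Iic (0:ℝ), pker z * Q (x - z)) =
      ∫ z in Ioi (0:ℝ), pker z * Q (x + z) := by
    have := integral_comp_neg_Iic (0:ℝ) (fun w => pker (-w) * Q (x + w))
    simp only [neg_neg, neg_zero, ← sub_eq_add_neg] at this
    rw [this]
    refine setIntegral_congr_fun measurableSet_Ioi (fun z _ => ?_)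
    rw [pker_neg]
  have h4 : (∫ z in Ioi (0:ℝ), pker z * Q (x + z)) =
      (1/2) * ∫ t in Ioi (0:ℝ), Real.exp (-t) * Q (x + t) := by
    rw [← integral_const_mul]
    refine setIntegral_congr_fun measurableSet_Ioi (fun z hz => ?_)
    simp only [pker, abs_of_pos (mem_Ioi.mp hz)]; ring
  have h5 : (∫ z in Ioi (0:ℝ), pker z * Q (x - z)) =
      (1/2) * ∫ t in Ioi (0:ℝ), Real.exp (-t) * Q (x - t) := by
    rw [← integral_const_mul]
    refine setIntegral_congr_fun measurableSet_Ioi (fun z hz => ?_)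
    simp only [pker, abs_of_pos (mem_Ioi.mp hz)]; ring
  rw [h1, h2, h3, h4, h5]

lemma pker_total (x : ℝ) : (∫ y : ℝ, pker (x - y)) = 1 := by
  have := pker_split x (fun _ => 1) continuous_const 1 (fun y => by norm_num)
  simp only [mul_one] at this
  rw [show (fun y : ℝ => pker (x - y)) = fun y : ℝ => pker (x - y) * 1 by funext y; ring] at this ⊢
  rw [this, integral_exp_neg_Ioi_zero]
  norm_num


lemma side_arith (γ K α b w v : ℝ) (hγ : 0 < γ) (hαeq : 2*K^2*α^2 + α = 1)
    (hb : 0 ≤ b) (hbv : b ≤ v) :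
    γ * (α * (b^2 + 2*K*b*w)) ≤ γ*v^2 + γ/2*w^2 := by
  have h1 : α * (b^2 + 2*K*b*w) ≤ b^2 + w^2/2 := by
    nlinarith [sq_nonneg (w - 2*K*α*b), sq_nonneg b]
  have h2 : b^2 ≤ v^2 := by nlinarith
  nlinarith [mul_le_mul_of_nonneg_left h1 hγ.le, mul_le_mul_of_nonneg_left h2 hγ.le]

lemma side_estimate (γ K α a : ℝ) (hγ : 0 < γ) (hK0 : 0 < K)
    (hαeq : 2*K^2*α^2 + α = 1) (hα0 : 0 < α) (ha : 0 ≤ a)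
    (V W : ℝ → ℝ) (hV : Continuous V) (hW : Continuous W)
    (CV : ℝ) (hVbd : ∀ t, |V t| ≤ CV) (CW : ℝ) (hWbd : ∀ t, |W t| ≤ CW)
    (hV0 : ∀ t, 0 ≤ V t)
    (hlip : ∀ t, 0 ≤ t → a - K * (∫ s in (0:ℝ)..t, |W s|) ≤ V t) :
    α * γ * a^2 ≤ ∫ t in Ioi (0:ℝ), Real.exp (-t) * (γ * V t^2 + γ/2 * W t^2) := by
  -- integrability of the full integrand on `Ioi 0`
  have hcont : Continuous (fun t => Real.exp (-t) * (γ * V t^2 + γ/2 * W t^2)) := by fun_prop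
  have hnn : ∀ t, 0 ≤ Real.exp (-t) * (γ * V t^2 + γ/2 * W t^2) := by
    intro t; positivity
  have hInt : IntegrableOn (fun t => Real.exp (-t) * (γ * V t^2 + γ/2 * W t^2)) (Ioi (0:ℝ)) := by
    have hexp : IntegrableOn (fun t : ℝ => Real.exp (-t)) (Ioi (0:ℝ)) := by
      have := exp_neg_integrableOn_Ioi (0:ℝ) one_pos
      simpa using this
    have := hexp.bdd_mul (f := fun t => γ * V t^2 + γ/2 * W t^2) (c := γ * CV^2 + γ/2 * CW^2)
      (by fun_prop : Continuous fun t => γ * V t^2 + γ/2 * W t^2).aestronglyMeasurable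
      (Filter.Eventually.of_forall fun t => by
        have h1 : V t^2 ≤ CV^2 := sq_le_sq' (neg_le_of_abs_le (hVbd t)) (le_of_abs_le (hVbd t))
        have h2 : W t^2 ≤ CW^2 := sq_le_sq' (neg_le_of_abs_le (hWbd t)) (le_of_abs_le (hWbd t))
        have : |γ * V t^2 + γ/2 * W t^2| = γ * V t^2 + γ/2 * W t^2 := abs_of_nonneg (by positivity)
        rw [Real.norm_eq_abs, this]
        nlinarith)
    simpa [mul_comm, IntegrableOn] using this
  rcases eq_or_lt_of_le ha with h0 | hapos
  · -- a = 0 : trivial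
    rw [← h0]
    simpa using setIntegral_nonneg measurableSet_Ioi (fun t _ => hnn t)
  -- main case a > 0
  set A : ℝ → ℝ := fun t => ∫ s in (0:ℝ)..t, |W s| with hA
  have hAderiv : ∀ t, HasDerivAt A (|W t|) t := by
    intro t
    exact intervalIntegral.integral_hasDerivAt_right (hW.abs.intervalIntegrable _ _)
      (hW.abs.stronglyMeasurableAtFilter _ _) hW.abs.continuousAt
  have hAcont : Continuous A := by
    rw [continuous_iff_continuousAt]; exact fun t => (hAderiv t).continuousAt
  have hAmono : Monotone A :=
    monotone_of_deriv_nonneg (fun t => (hAderiv t).differentiableAt)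
      (fun t => by rw [(hAderiv t).deriv]; positivity)
  have hA0 : A 0 = 0 := intervalIntegral.integral_same
  set b : ℝ → ℝ := fun t => a - K * A t with hb
  have hbcont : Continuous b := by fun_prop
  have hbderiv : ∀ t, HasDerivAt b (-(K * |W t|)) t := fun t =>
    ((hAderiv t).const_mul K).const_sub a
  have hb0 : b 0 = a := by simp [hb, hA0]
  have hbanti : Antitone b := by
    intro s t hst
    simp only [hb]
    have := hAmono hst
    nlinarith
  have hble : ∀ t, 0 ≤ t → b t ≤ a := fun t ht => by
    have := hbanti ht; rwa [hb0] at this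
  set G : ℝ → ℝ := fun t => α * γ * (Real.exp (-t) * (b t)^2) with hG
  set D : ℝ → ℝ := fun t =>
    α * γ * (-Real.exp (-t) * (b t)^2 + Real.exp (-t) * (2 * b t * -(K * |W t|))) with hD
  have hGderiv : ∀ t, HasDerivAt G (D t) t := by
    intro t
    have h1 : HasDerivAt (fun t : ℝ => Real.exp (-t)) (-Real.exp (-t)) t := by
      simpa using ((hasDerivAt_neg t).exp)
    have h2 : HasDerivAt (fun t => (b t)^2) (2 * b t * -(K * |W t|)) t := by
      simpa [mul_comm, mul_assoc] using (hbderiv t).fun_pow 2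
    simpa [hG, hD, mul_add] using ((h1.mul h2).const_mul (α * γ))
  have hDcont : Continuous D := by fun_prop
  -- key estimate for finite T
  have key : ∀ T : ℝ, 0 < T → (∀ t ∈ Icc (0:ℝ) T, 0 ≤ b t) →
      α * γ * (a^2 - Real.exp (-T) * (b T)^2) ≤
        ∫ t in Ioi (0:ℝ), Real.exp (-t) * (γ * V t^2 + γ/2 * W t^2) := by
    intro T hT hbpos
    have step1 : (∫ t in Ioc (0:ℝ) T, Real.exp (-t) * (γ * V t^2 + γ/2 * W t^2)) ≤
        ∫ t in Ioi (0:ℝ), Real.exp (-t) * (γ * V t^2 + γ/2 * W t^2) := by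
      apply setIntegral_mono_set hInt
      · exact Filter.Eventually.of_forall (fun t => hnn t)
      · exact HasSubset.Subset.eventuallyLE Ioc_subset_Ioi_self
    have step2 : (∫ t in (0:ℝ)..T, -D t) ≤
        ∫ t in (0:ℝ)..T, Real.exp (-t) * (γ * V t^2 + γ/2 * W t^2) := by
      apply intervalIntegral.integral_mono_on hT.le
        (hDcont.neg.intervalIntegrable _ _) (hcont.intervalIntegrable _ _)
      intro t ht
      have hbt : 0 ≤ b t := hbpos t ht
      have hVt : b t ≤ V t := hlip t ht.1
      have hE : (0:ℝ) < Real.exp (-t) := Real.exp_pos _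
      have hw2 : |W t|^2 = W t^2 := sq_abs _
      have : -D t = Real.exp (-t) * (γ * (α * ((b t)^2 + 2 * K * b t * |W t|))) := by
        simp only [hD]; ring
      rw [Pi.neg_apply, this]
      have h3 : γ * (α * ((b t)^2 + 2 * K * b t * |W t|)) ≤ γ * V t^2 + γ/2 * W t^2 := by
        rw [← hw2]
        exact side_arith γ K α (b t) (|W t|) (V t) hγ hαeq hbt hVt
      exact mul_le_mul_of_nonneg_left h3 hE.le
    have step3 : (∫ t in (0:ℝ)..T, -D t) = α * γ * (a^2 - Real.exp (-T) * (b T)^2) := by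
      rw [intervalIntegral.integral_neg]
      rw [intervalIntegral.integral_eq_sub_of_hasDerivAt (fun t _ => hGderiv t)
        (hDcont.intervalIntegrable _ _)]
      simp only [hG, hb0]
      simp only [neg_zero, Real.exp_zero, one_mul]
      ring
    calc α * γ * (a^2 - Real.exp (-T) * (b T)^2) = ∫ t in (0:ℝ)..T, -D t := step3.symm
      _ ≤ ∫ t in (0:ℝ)..T, Real.exp (-t) * (γ * V t^2 + γ/2 * W t^2) := step2
      _ = ∫ t in Ioc (0:ℝ) T, Real.exp (-t) * (γ * V t^2 + γ/2 * W t^2) :=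
          intervalIntegral.integral_of_le hT.le
      _ ≤ _ := step1
  by_cases hS : ∃ t, 0 ≤ t ∧ b t ≤ 0
  · obtain ⟨t₁, ht₁, hbt₁⟩ := hS
    have h01 : (0:ℝ) ≤ t₁ := ht₁
    have : (0:ℝ) ∈ Icc (b t₁) (b 0) := by rw [hb0]; exact ⟨hbt₁, hapos.le⟩
    obtain ⟨T, hTmem, hbT⟩ := intermediate_value_Icc' h01 (hbcont.continuousOn) this
    have hTpos : 0 < T := by
      rcases eq_or_lt_of_le hTmem.1 with h | h
      · exfalso; rw [← h, hb0] at hbT; exact hapos.ne' hbT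
      · exact h
    have := key T hTpos (fun t ht => by rw [← hbT]; exact hbanti ht.2)
    rw [hbT] at this
    simpa using this
  · push_neg at hS
    have hbpos : ∀ t, 0 ≤ t → 0 < b t := hS
    have hlim : Filter.Tendsto (fun T => α * γ * (a^2 - Real.exp (-T) * a^2))
        Filter.atTop (nhds (α * γ * (a^2 - 0 * a^2))) := by
      apply Filter.Tendsto.const_mul
      apply Filter.Tendsto.const_sub
      exact (Real.tendsto_exp_neg_atTop_nhds_zero.mul_const _)
    simp only [zero_mul, sub_zero] at hlim
    apply le_of_tendsto hlim
    filter_upwards [Filter.eventually_ge_atTop (1:ℝ)] with T hT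
    have hTpos : (0:ℝ) < T := lt_of_lt_of_le one_pos hT
    have h1 := key T hTpos (fun t ht => (hbpos t ht.1).le)
    have hbTa := hble T hTpos.le
    have hbT0 := (hbpos T hTpos.le).le
    have hE := (Real.exp_pos (-T)).le
    have h2 : Real.exp (-T) * (b T)^2 ≤ Real.exp (-T) * a^2 :=
      mul_le_mul_of_nonneg_left (by nlinarith) hE
    have h3 : α * γ * (a^2 - Real.exp (-T) * a^2) ≤ α * γ * (a^2 - Real.exp (-T) * (b T)^2) :=
      mul_le_mul_of_nonneg_left (by linarith) (by positivity)
    exact le_trans h3 h1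


/-- Pointwise consequence of the convolution estimate (minimum case) used in (3.3):
`(p * (g(u) + f''(u)/2 u'²))(x) ≥ α (g(u(x)) - m) + m`, and consequently
`g(u(x)) - (p * (g(u) + f''(u)/2 u'²))(x) ≤ (1-α)(g(u(x)) - m) = 2K²α²γ φ(u(x))²`. -/
theorem full_convolution_estimate_min
    (γ : ℝ) (hγ : 0 < γ)
    (f : ℝ → ℝ) (hf : ContDiff ℝ 2 f) (hconv : ∀ x : ℝ, γ ≤ deriv (deriv f) x)
    (g : ℝ → ℝ) (hg : Continuous g)
    (c m : ℝ) (hgc : g c = m) (hmin : ∀ x : ℝ, m ≤ g x)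
    (K : ℝ) (hK0 : 0 < K) (hK1 : K ≤ 1)
    (φ : ℝ → ℝ) (hφ : ∀ x : ℝ, φ x = Real.sqrt ((g x - m) / γ))
    (hLip : ∀ a b : ℝ, |φ a - φ b| ≤ K * |a - b|)
    (α : ℝ) (hα : α = (Real.sqrt (1 + 8 * K ^ 2) - 1) / (4 * K ^ 2))
    (u : ℝ → ℝ) (hu : ContDiff ℝ 1 u)
    (hbd : ∃ C : ℝ, ∀ x : ℝ, |u x| ≤ C ∧ |deriv u x| ≤ C) :
    ∀ x : ℝ,
      (α * (g (u x) - m) + m ≤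
        ∫ y : ℝ, pker (x - y) *
          (g (u y) + deriv (deriv f) (u y) / 2 * (deriv u y) ^ 2)) ∧
      (g (u x) -
        (∫ y : ℝ, pker (x - y) *
          (g (u y) + deriv (deriv f) (u y) / 2 * (deriv u y) ^ 2)) ≤
        (1 - α) * (g (u x) - m)) ∧
      (1 - α) * (g (u x) - m) = 2 * K ^ 2 * α ^ 2 * γ * (φ (u x)) ^ 2 := by
  -- preliminary facts
  have hucont : Continuous u := hu.continuous
  have hu' : Continuous (deriv u) := hu.continuous_deriv le_rfl
  have hf'' : Continuous (deriv (deriv f)) := by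
    have h1 : ContDiff ℝ (1+1 : ℕ∞) f := by exact_mod_cast hf
    exact ((contDiff_succ_iff_deriv (n := 1)).mp h1).2.2.continuous_deriv le_rfl
  have hφc : Continuous φ := by
    rw [funext hφ]
    fun_prop
  have hφ0 : ∀ z, 0 ≤ φ z := fun z => by rw [hφ z]; exact Real.sqrt_nonneg _
  have hφsq : ∀ z, γ * (φ z)^2 = g z - m := by
    intro z
    rw [hφ z, Real.sq_sqrt (div_nonneg (by linarith [hmin z]) hγ.le)]
    field_simp
  -- facts about α
  have hs2 : Real.sqrt (1+8*K^2)^2 = 1+8*K^2 := Real.sq_sqrt (by positivity)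
  have hs0 := Real.sqrt_nonneg (1+8*K^2)
  have hs1 : 1 < Real.sqrt (1+8*K^2) := by nlinarith
  have hK2 : (0:ℝ) < 4*K^2 := by positivity
  have hα0 : 0 < α := by rw [hα]; exact div_pos (by linarith) hK2
  have hαeq : 2*K^2*α^2 + α = 1 := by
    rw [hα]
    have hK2' : (4*K^2) ≠ 0 := ne_of_gt hK2
    field_simp
    nlinarith [hs2, Real.sq_sqrt (show (0:ℝ) ≤ 1 + K^2*8 by positivity)]
  -- bounds
  obtain ⟨C, hC⟩ := hbd
  obtain ⟨Mg, hMg⟩ := isCompact_Icc.exists_bound_of_continuousOn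
    (f := g) (s := Icc (-C) C) hg.continuousOn
  obtain ⟨Mf, hMf⟩ := isCompact_Icc.exists_bound_of_continuousOn
    (f := deriv (deriv f)) (s := Icc (-C) C) hf''.continuousOn
  obtain ⟨Mp, hMp⟩ := isCompact_Icc.exists_bound_of_continuousOn
    (f := φ) (s := Icc (-C) C) hφc.continuousOn
  have humem : ∀ y, u y ∈ Icc (-C) C := fun y => mem_Icc.mpr (abs_le.mp (hC y).1)
  have hgu : ∀ y, |g (u y)| ≤ Mg := fun y => by simpa using hMg (u y) (humem y)
  have hfu : ∀ y, |deriv (deriv f) (u y)| ≤ Mf := fun y => by simpa using hMf (u y) (humem y)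
  have hpu : ∀ y, |φ (u y)| ≤ Mp := fun y => by simpa using hMp (u y) (humem y)
  have hu'2 : ∀ y, (deriv u y)^2 ≤ C^2 := fun y =>
    sq_le_sq' (neg_le_of_abs_le (hC y).2) (le_of_abs_le (hC y).2)
  have hpu2 : ∀ y, (φ (u y))^2 ≤ Mp^2 := fun y =>
    sq_le_sq' (neg_le_of_abs_le (hpu y)) (le_of_abs_le (hpu y))
  intro x
  set Q : ℝ → ℝ := fun y => γ * (φ (u y))^2 + γ/2 * (deriv u y)^2 with hQ
  set H : ℝ → ℝ := fun y => g (u y) + deriv (deriv f) (u y) / 2 * (deriv u y) ^ 2 with hH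
  have hQc : Continuous Q := by rw [hQ]; fun_prop
  have hHc : Continuous H := by rw [hH]; fun_prop
  have hQbd : ∀ y, |Q y| ≤ γ*Mp^2 + γ/2*C^2 := by
    intro y
    have h1 := hpu2 y
    have h2 := hu'2 y
    have h3 : 0 ≤ Q y := by rw [hQ]; positivity
    rw [abs_of_nonneg h3, hQ]
    simp only []
    nlinarith
  have hQmbd : ∀ y, |m + Q y| ≤ |m| + (γ*Mp^2 + γ/2*C^2) := fun y =>
    le_trans (abs_add_le m (Q y)) (by linarith [hQbd y])
  have hHbd : ∀ y, |H y| ≤ Mg + Mf/2*C^2 := by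
    intro y
    have h1 := hgu y
    have h2 := hfu y
    have h3 := hu'2 y
    have h4 : |deriv (deriv f) (u y) / 2 * (deriv u y) ^ 2|
        = |deriv (deriv f) (u y)|/2 * (deriv u y)^2 := by
      rw [abs_mul, abs_div, abs_of_nonneg (sq_nonneg (deriv u y))]
      norm_num
    have h5 := abs_add_le (g (u y)) (deriv (deriv f) (u y) / 2 * (deriv u y) ^ 2)
    rw [hH]
    simp only []
    nlinarith [abs_nonneg (deriv (deriv f) (u y)), sq_nonneg (deriv u y)]
  set a := φ (u x) with ha'
  have haQ : α * γ * a^2 = α * (g (u x) - m) := by rw [ha', ← hφsq (u x)]; ring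
  -- integrability
  have hIH : Integrable (fun y => pker (x - y) * H y) :=
    integrable_pker_mul' x H hHc _ hHbd
  have hImQ : Integrable (fun y => pker (x - y) * (m + Q y)) :=
    integrable_pker_mul' x _ (by fun_prop) _ hQmbd
  -- pointwise comparison
  have hpoint : ∀ y, m + Q y ≤ H y := by
    intro y
    have h1 := hφsq (u y)
    have h2 := hconv (u y)
    have h3 := sq_nonneg (deriv u y)
    rw [hQ, hH]
    simp only []
    nlinarith
  have hmono : (∫ y, pker (x-y) * (m + Q y)) ≤ ∫ y, pker (x-y) * H y :=
    integral_mono hImQ hIH (fun y => mul_le_mul_of_nonneg_left (hpoint y) (pker_nonneg _))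
  have hsplit := pker_split x (fun y => m + Q y) (by fun_prop) _ hQmbd
  have hexp : IntegrableOn (fun t : ℝ => Real.exp (-t)) (Ioi (0:ℝ)) := by
    have := exp_neg_integrableOn_Ioi (0:ℝ) one_pos
    simpa using this
  -- half-line estimates
  have hIoim : ∀ σ : ℝ, σ = 1 ∨ σ = -1 →
      m + α*γ*a^2 ≤ ∫ t in Ioi (0:ℝ), Real.exp (-t) * (m + Q (x + σ*t)) := by
    intro σ hσ
    have hσ1 : |σ| = 1 := by rcases hσ with h|h <;> simp [h]
    have hQσc : Continuous (fun t => Q (x + σ*t)) := by fun_prop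
    have hint2 : IntegrableOn (fun t => Real.exp (-t) * Q (x + σ*t)) (Ioi (0:ℝ)) := by
      have := hexp.bdd_mul hQσc.aestronglyMeasurable
        (Filter.Eventually.of_forall fun t => by rw [Real.norm_eq_abs]; exact hQbd _)
      simpa [mul_comm, IntegrableOn] using this
    have hint1 : IntegrableOn (fun t : ℝ => Real.exp (-t) * m) (Ioi (0:ℝ)) := hexp.mul_const m
    have heq : (∫ t in Ioi (0:ℝ), Real.exp (-t) * (m + Q (x+σ*t))) =
        (∫ t in Ioi (0:ℝ), Real.exp (-t) * m) +
          ∫ t in Ioi (0:ℝ), Real.exp (-t) * Q (x+σ*t) := by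
      rw [← integral_add hint1 hint2]
      simp_rw [mul_add]
    have hm : (∫ t in Ioi (0:ℝ), Real.exp (-t) * m) = m := by
      rw [integral_mul_const, integral_exp_neg_Ioi_zero, one_mul]
    have hmain : α*γ*a^2 ≤ ∫ t in Ioi (0:ℝ), Real.exp (-t) * Q (x+σ*t) := by
      have hVc : Continuous (fun t => φ (u (x + σ*t))) := by fun_prop
      have hWc : Continuous (fun t => deriv u (x + σ*t)) := by fun_prop
      have hlip' : ∀ t, 0 ≤ t →
          a - K * (∫ s in (0:ℝ)..t, |deriv u (x + σ*s)|) ≤ φ (u (x+σ*t)) := by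
        intro t ht
        have hU : ∀ s : ℝ, HasDerivAt (fun r => u (x + σ*r)) (deriv u (x+σ*s) * σ) s := by
          intro s
          have h1 : HasDerivAt u (deriv u (x+σ*s)) (x+σ*s) :=
            ((hu.differentiable one_ne_zero) (x+σ*s)).hasDerivAt
          have h2 : HasDerivAt (fun r : ℝ => x + σ*r) σ s := by
            simpa using ((hasDerivAt_id s).const_mul σ).const_add x
          exact h1.comp s h2
        have hftc : (∫ s in (0:ℝ)..t, deriv u (x+σ*s) * σ) = u (x+σ*t) - u (x+σ*0) :=
          intervalIntegral.integral_eq_sub_of_hasDerivAt (fun s _ => hU s)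
            ((by fun_prop : Continuous fun s => deriv u (x+σ*s) * σ).intervalIntegrable _ _)
        have h0 : u (x + σ*0) = u x := by norm_num
        have habs : |u (x+σ*t) - u x| ≤ ∫ s in (0:ℝ)..t, |deriv u (x+σ*s)| := by
          calc |u (x+σ*t) - u x| = |∫ s in (0:ℝ)..t, deriv u (x+σ*s)*σ| := by
                rw [hftc, h0]
            _ ≤ ∫ s in (0:ℝ)..t, |deriv u (x+σ*s)*σ| :=
                intervalIntegral.abs_integral_le_integral_abs ht
            _ = ∫ s in (0:ℝ)..t, |deriv u (x+σ*s)| := by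
                simp [abs_mul, hσ1]
        have hlipuse := hLip (u (x+σ*t)) (u x)
        have h6 : K * |u (x+σ*t) - u x| ≤ K * ∫ s in (0:ℝ)..t, |deriv u (x+σ*s)| :=
          mul_le_mul_of_nonneg_left habs hK0.le
        have h7 := neg_abs_le (φ (u (x+σ*t)) - φ (u x))
        rw [ha']
        linarith
      have := side_estimate γ K α a hγ hK0 hαeq hα0 (hφ0 _)
        (fun t => φ (u (x + σ*t))) (fun t => deriv u (x + σ*t)) hVc hWc
        Mp (fun t => hpu _) C (fun t => (hC _).2) (fun t => hφ0 _) hlip'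
      have heq2 : (fun t => Real.exp (-t) * (γ * (φ (u (x + σ*t)))^2
          + γ/2 * (deriv u (x + σ*t))^2)) = fun t => Real.exp (-t) * Q (x+σ*t) := by
        funext t; rw [hQ]
      rw [← heq2]
      exact this
    rw [heq, hm]
    linarith
  have hS1 := hIoim 1 (Or.inl rfl)
  have hS2 := hIoim (-1) (Or.inr rfl)
  simp only [one_mul] at hS1
  simp only [neg_one_mul, ← sub_eq_add_neg] at hS2
  have conj1 : α * (g (u x) - m) + m ≤ ∫ y, pker (x-y) * H y := by
    rw [← haQ]
    calc α * γ * a^2 + m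
        = (1/2) * (m + α*γ*a^2) + (1/2) * (m + α*γ*a^2) := by ring
      _ ≤ (1/2) * (∫ t in Ioi (0:ℝ), Real.exp (-t) * (m + Q (x + t)))
          + (1/2) * (∫ t in Ioi (0:ℝ), Real.exp (-t) * (m + Q (x - t))) := by
          gcongr <;> norm_num
      _ = ∫ y, pker (x-y) * (m + Q y) := hsplit.symm
      _ ≤ ∫ y, pker (x-y) * H y := hmono
  refine ⟨conj1, by linarith [conj1], ?_⟩
  rw [← hφsq (u x)]
  linear_combination (-(γ*(φ (u x))^2)) * hαeq
end
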